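/- arXiv:1407.3753 — 7 statements merged into one kernel-verified Lean document; each statement's English description precedes it below -/
import Mathlib

section
/- In the Gaussian observation model with uniform background B̃_i = B̃ > 0 for all i, any estimator F̂ : ℕⁿ → ℝ with finite second moment satisfying the regularity identity E[F̂(I)·Σ_{i=1}^n g_i(x_c)(I_i/λ_i − 1)] = 1 obeys Var(F̂(I)) ≥ 2πσ²·B̃ · (Σ_{i=1}^n J_i(x_c)² / (1 + (F̃/(√(2π)·σ·B̃))·J_i(x_c)))^{-1}, where J_i(x_c) = ∫_{x_i−Δx/2}^{x_i+Δx/2} e^{−(x−x_c)²/(2σ²)} dx; equivalently, the Fisher information Σ_{i=1}^n g_i(x_c)²/(F̃ g_i(x_c) + B̃) equals (1/(2πσ²B̃)) · Σ_{i=1}^n J_i(x_c)²/(1 + (F̃/(√(2π)σB̃)) J_i(x_c)). -/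
open MeasureTheory ProbabilityTheory Real

open scoped NNReal Nat ENNReal

lemma pois_hasSum_one (r : ℝ≥0) : HasSum (fun m : ℕ => poissonPMFReal r m) 1 :=
  poissonPMFRealSum r

lemma pois_hasSum_id (r : ℝ≥0) :
    HasSum (fun m : ℕ => poissonPMFReal r m * m) r := by
  apply (hasSum_nat_add_iff' 1).mp
  have h : (fun n : ℕ => poissonPMFReal r (n + 1) * (↑(n + 1) : ℝ))
      = fun n : ℕ => (r : ℝ) * poissonPMFReal r n := by
    funext n
    have h0 : ((n ! : ℕ) : ℝ) ≠ 0 := Nat.cast_ne_zero.mpr n.factorial_ne_zero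
    simp only [poissonPMFReal, Nat.factorial_succ]
    push_cast
    field_simp
    ring
  rw [h]
  simpa [poissonPMFReal] using (poissonPMFRealSum r).mul_left (r : ℝ)

lemma pois_hasSum_sq (r : ℝ≥0) :
    HasSum (fun m : ℕ => poissonPMFReal r m * (m : ℝ) ^ 2) ((r : ℝ) ^ 2 + r) := by
  have h2 : HasSum (fun m : ℕ => poissonPMFReal r m * ((m : ℝ) * ((m : ℝ) - 1)))
      ((r : ℝ) ^ 2) := by
    apply (hasSum_nat_add_iff' 2).mp
    have h : (fun n : ℕ => poissonPMFReal r (n + 2) * ((↑(n + 2) : ℝ) * ((↑(n + 2) : ℝ) - 1)))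
        = fun n : ℕ => (r : ℝ) ^ 2 * poissonPMFReal r n := by
      funext n
      have h0 : ((n ! : ℕ) : ℝ) ≠ 0 := Nat.cast_ne_zero.mpr n.factorial_ne_zero
      simp only [poissonPMFReal, Nat.factorial_succ]
      push_cast
      field_simp
      ring
    rw [h]
    have := (poissonPMFRealSum r).mul_left ((r : ℝ) ^ 2)
    simpa [poissonPMFReal, Finset.sum_range_succ] using this
  have := h2.add (pois_hasSum_id r)
  convert this using 2 with m
  ring

lemma pois_apply (r : ℝ≥0) (m : ℕ) :
    (poissonMeasure r) {m} = ENNReal.ofReal (poissonPMFReal r m) :=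
  poissonMeasure_singleton r m

lemma pois_integrable {r : ℝ≥0} {f : ℕ → ℝ}
    (h : Summable (fun m => poissonPMFReal r m * |f m|)) :
    Integrable f (poissonMeasure r) := by
  refine ⟨measurable_from_nat.aestronglyMeasurable, ?_⟩
  rw [HasFiniteIntegral, lintegral_countable']
  have : ∀ m : ℕ, ‖f m‖ₑ * (poissonMeasure r) {m}
      = ENNReal.ofReal (poissonPMFReal r m * |f m|) := by
    intro m
    rw [pois_apply, ← ofReal_norm, Real.norm_eq_abs,
      ← ENNReal.ofReal_mul (abs_nonneg _)]
    ring_nf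
  rw [tsum_congr this, ← ENNReal.ofReal_tsum_of_nonneg
    (fun m => mul_nonneg poissonPMFReal_nonneg (abs_nonneg _)) h]
  exact ENNReal.ofReal_lt_top

lemma pois_integral {r : ℝ≥0} {f : ℕ → ℝ} (hi : Integrable f (poissonMeasure r)) :
    ∫ m, f m ∂(poissonMeasure r) = ∑' m, poissonPMFReal r m * f m := by
  rw [integral_poissonMeasure' hi]
  refine tsum_congr fun m => ?_
  rw [smul_eq_mul]
  rfl

lemma pois_int_id (r : ℝ≥0) : Integrable (fun m : ℕ => (m : ℝ)) (poissonMeasure r) :=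
  pois_integrable (by simpa [Nat.abs_cast] using (pois_hasSum_id r).summable)

lemma pois_int_sq (r : ℝ≥0) : Integrable (fun m : ℕ => (m : ℝ) ^ 2) (poissonMeasure r) :=
  pois_integrable (by simpa [abs_of_nonneg] using (pois_hasSum_sq r).summable)

lemma pois_E_id (r : ℝ≥0) : ∫ m, (m : ℝ) ∂(poissonMeasure r) = r := by
  rw [pois_integral (pois_int_id r)]
  exact (pois_hasSum_id r).tsum_eq

lemma pois_E_sq (r : ℝ≥0) : ∫ m, (m : ℝ) ^ 2 ∂(poissonMeasure r) = (r : ℝ) ^ 2 + r := by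
  rw [pois_integral (pois_int_sq r)]
  exact (pois_hasSum_sq r).tsum_eq

lemma phi_eq (g lam : ℝ) (hlam : lam ≠ 0) :
    (fun m : ℕ => g * ((m : ℝ) / lam - 1))
      = fun m : ℕ => (g / lam) * (m : ℝ) + (-g) := by
  funext m
  field_simp
  ring

lemma phi_integrable (r : ℝ≥0) (g lam : ℝ) (hlam : lam ≠ 0) :
    Integrable (fun m : ℕ => g * ((m : ℝ) / lam - 1)) (poissonMeasure r) := by
  rw [phi_eq g lam hlam]
  exact ((pois_int_id r).const_mul _).add (integrable_const _)

lemma phi_E (r : ℝ≥0) (g lam : ℝ) (hlam : lam ≠ 0) (hr : (r : ℝ) = lam) :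
    ∫ m, g * ((m : ℝ) / lam - 1) ∂(poissonMeasure r) = 0 := by
  rw [phi_eq g lam hlam, integral_add ((pois_int_id r).const_mul _) (integrable_const _),
    integral_const_mul, pois_E_id, integral_const]
  simp [hr]
  field_simp
  ring

lemma phi_sq_eq (g lam : ℝ) (hlam : lam ≠ 0) :
    (fun m : ℕ => (g * ((m : ℝ) / lam - 1)) ^ 2)
      = fun m : ℕ => (g / lam) ^ 2 * (m : ℝ) ^ 2 + ((-(2 * g ^ 2 / lam)) * (m : ℝ) + g ^ 2) := by
  funext m
  field_simp
  ring

lemma phi_sq_integrable (r : ℝ≥0) (g lam : ℝ) (hlam : lam ≠ 0) :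
    Integrable (fun m : ℕ => (g * ((m : ℝ) / lam - 1)) ^ 2) (poissonMeasure r) := by
  rw [phi_sq_eq g lam hlam]
  exact ((pois_int_sq r).const_mul _).add
    (((pois_int_id r).const_mul _).add (integrable_const _))

lemma phi_sq_E (r : ℝ≥0) (g lam : ℝ) (hlam : lam ≠ 0) (hr : (r : ℝ) = lam) :
    ∫ m, (g * ((m : ℝ) / lam - 1)) ^ 2 ∂(poissonMeasure r) = g ^ 2 / lam := by
  have i1 := (pois_int_sq r).const_mul ((g / lam) ^ 2)
  have i2 := (pois_int_id r).const_mul (-(2 * g ^ 2 / lam))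
  have i3 : Integrable (fun _ : ℕ => g ^ 2) (poissonMeasure r) := integrable_const _
  have i23 : Integrable (fun m : ℕ => -(2 * g ^ 2 / lam) * (m : ℝ) + g ^ 2)
      (poissonMeasure r) := i2.add i3
  rw [phi_sq_eq g lam hlam, integral_add i1 i23, integral_add i2 i3,
    integral_const_mul, integral_const_mul, pois_E_id, pois_E_sq, integral_const]
  simp only [measure_univ, ENNReal.toReal_one, smul_eq_mul, one_mul, hr, probReal_univ]
  field_simp
  ring

def CoordType (n : ℕ) (_ : Fin n) : Type := ℕ


/-- **Cramér–Rao bound for flux in the Gaussian model with uniform background.**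
Pixels of size `Δx` centered at `xpix i` collect the flux fractions
`g i = ∫ Φ(x − x_c) dx` of a Gaussian PSF; counts are independent Poisson with
means `λ i = F̃ g i + B̃`, `B̃ > 0` uniform.  Any estimator with finite second
moment satisfying the regularity identity obeys
`Var ≥ 2πσ²B̃ ⬝ (Σ J i² / (1 + F̃ J i/(√(2π)σB̃)))⁻¹`; equivalently the Fisher
information `Σ g i²/(F̃ g i + B̃)` equals
`(1/(2πσ²B̃)) Σ J i²/(1 + F̃ J i/(√(2π)σB̃))`. -/
theorem stmt_1
    (n : ℕ) (σ Δx : ℝ) (hσ : 0 < σ) (hΔx : 0 < Δx)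
    (xpix : Fin n → ℝ) (xc : ℝ) (F B : ℝ) (hF : 0 < F) (hB : 0 < B)
    (g J : Fin n → ℝ)
    (hg : ∀ i, g i = ∫ x in (xpix i - Δx / 2)..(xpix i + Δx / 2),
        (1 / (Real.sqrt (2 * π) * σ)) * Real.exp (-(x - xc) ^ 2 / (2 * σ ^ 2)))
    (hJ : ∀ i, J i = ∫ x in (xpix i - Δx / 2)..(xpix i + Δx / 2),
        Real.exp (-(x - xc) ^ 2 / (2 * σ ^ 2)))
    (lam : Fin n → ℝ) (hlam : ∀ i, lam i = F * g i + B)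
    (μ : Measure (Fin n → ℕ))
    (hμ : μ = Measure.pi fun i => poissonMeasure (lam i).toNNReal)
    (Fhat : (Fin n → ℕ) → ℝ)
    (hmem : MemLp Fhat 2 μ)
    (hreg : ∫ k, Fhat k * (∑ i, g i * ((k i : ℝ) / lam i - 1)) ∂μ = 1) :
    2 * π * σ ^ 2 * B *
        (∑ i, J i ^ 2 / (1 + F / (Real.sqrt (2 * π) * σ * B) * J i))⁻¹
      ≤ variance Fhat μ ∧
    ∑ i, g i ^ 2 / (F * g i + B)
      = (1 / (2 * π * σ ^ 2 * B)) *
        ∑ i, J i ^ 2 / (1 + F / (Real.sqrt (2 * π) * σ * B) * J i) := by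
  have h2π : (0:ℝ) < 2 * π := by positivity
  have hsp : 0 < Real.sqrt (2 * π) := Real.sqrt_pos.mpr h2π
  have hs2 : Real.sqrt (2 * π) ^ 2 = 2 * π := Real.sq_sqrt h2π.le
  have hab : ∀ i : Fin n, xpix i - Δx / 2 ≤ xpix i + Δx / 2 := fun i => by linarith
  have hJ0 : ∀ i, 0 ≤ J i := fun i => by
    rw [hJ i]
    exact intervalIntegral.integral_nonneg (hab i) fun x _ => (Real.exp_pos _).le
  have hgJ : ∀ i, g i = J i / (Real.sqrt (2 * π) * σ) := fun i => by
    rw [hg i, intervalIntegral.integral_const_mul, ← hJ i, one_div, inv_mul_eq_div]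
  have hg0 : ∀ i, 0 ≤ g i := fun i => by
    rw [hgJ i]; exact div_nonneg (hJ0 i) (by positivity)
  have hlam_pos : ∀ i, 0 < lam i := fun i => by
    have := mul_nonneg hF.le (hg0 i); rw [hlam i]; linarith
  have hlam_ne : ∀ i, lam i ≠ 0 := fun i => (hlam_pos i).ne'
  have hr : ∀ i, (((lam i).toNNReal : ℝ)) = lam i := fun i =>
    Real.coe_toNNReal _ (hlam_pos i).le
  -- Part 2: the Fisher information identity
  have hiden : ∀ i, g i ^ 2 / (F * g i + B)
      = 1 / (2 * π * σ ^ 2 * B)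
        * (J i ^ 2 / (1 + F / (Real.sqrt (2 * π) * σ * B) * J i)) := by
    intro i
    have hJi := hJ0 i
    have hd1 : 0 < F * (J i / (Real.sqrt (2 * π) * σ)) + B := by
      have : 0 ≤ F * (J i / (Real.sqrt (2 * π) * σ)) :=
        mul_nonneg hF.le (div_nonneg hJi (by positivity))
      linarith
    have hd2 : 0 < 1 + F / (Real.sqrt (2 * π) * σ * B) * J i := by
      have : 0 ≤ F / (Real.sqrt (2 * π) * σ * B) * J i := by positivity
      linarith
    rw [hgJ i]
    field_simp
    rw [hs2]
    ring
  have hpart2 : (∑ i, g i ^ 2 / (F * g i + B))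
      = 1 / (2 * π * σ ^ 2 * B)
        * ∑ i, J i ^ 2 / (1 + F / (Real.sqrt (2 * π) * σ * B) * J i) := by
    rw [Finset.mul_sum]
    exact Finset.sum_congr rfl fun i _ => hiden i
  refine ⟨?_, hpart2⟩
  -- probability setup
  set P : Fin n → Measure ℕ := fun i => poissonMeasure (lam i).toNNReal with hPdef
  haveI hprob : ∀ i, IsProbabilityMeasure (P i) := fun i => (inferInstance : IsProbabilityMeasure (poissonMeasure _))
  haveI : IsProbabilityMeasure μ := by rw [hμ]; infer_instance
  letI : ∀ i : Fin n, MeasureSpace (CoordType n i) := fun i =>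
    { toMeasurableSpace := inferInstanceAs (MeasurableSpace ℕ), volume := P i }
  haveI hsf : ∀ i : Fin n, SigmaFinite (volume : Measure (CoordType n i)) := fun i => by
    have := hprob i
    show SigmaFinite (P i)
    infer_instance
  have hvol : (volume : Measure (∀ i : Fin n, CoordType n i)) = μ := by rw [hμ]; rfl
  have coord_int : ∀ (f : Fin n → ℕ → ℝ), (∀ i, Integrable (f i) (P i)) →
      Integrable (fun k : Fin n → ℕ => ∏ i, f i (k i)) μ := by
    intro f hf
    rw [← hvol]
    exact MeasureTheory.Integrable.fintype_prod_dep (𝕜 := ℝ) (E := CoordType n) (f := f) hf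
  have coord_eq : ∀ (f : Fin n → ℕ → ℝ),
      ∫ k, (∏ i, f i (k i)) ∂μ = ∏ i, ∫ m, f i m ∂(P i) := by
    intro f
    rw [← hvol]
    exact MeasureTheory.integral_fintype_prod_eq_prod (E := CoordType n) f
  set ph : Fin n → ℕ → ℝ := fun i m => g i * ((m : ℝ) / lam i - 1) with hphdef
  have hph_int : ∀ i, Integrable (ph i) (P i) := fun i =>
    phi_integrable _ _ _ (hlam_ne i)
  have hph_E : ∀ i, ∫ m, ph i m ∂(P i) = 0 := fun i =>
    phi_E _ _ _ (hlam_ne i) (hr i)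
  have hph_sq_int : ∀ i, Integrable (fun m => ph i m ^ 2) (P i) := fun i =>
    phi_sq_integrable _ _ _ (hlam_ne i)
  have hph_sq_E : ∀ i, ∫ m, ph i m ^ 2 ∂(P i) = g i ^ 2 / lam i := fun i =>
    phi_sq_E _ _ _ (hlam_ne i) (hr i)
  -- single coordinate integrals
  have hint1 : ∀ i, Integrable (fun k : Fin n → ℕ => ph i (k i)) μ := by
    intro i
    have heq : (fun k : Fin n → ℕ => ph i (k i))
        = fun k : Fin n → ℕ => ∏ l, (if l = i then ph i (k l) else 1) := by
      funext k; simp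
    rw [heq]
    refine coord_int (fun l m => if l = i then ph i m else 1) fun l => ?_
    by_cases h : l = i
    · subst h; simpa using hph_int l
    · simp only [if_neg h]; exact integrable_const 1
  have hE1 : ∀ i, ∫ k, ph i (k i) ∂μ = 0 := by
    intro i
    have heq : (fun k : Fin n → ℕ => ph i (k i))
        = fun k : Fin n → ℕ => ∏ l, (if l = i then ph i (k l) else 1) := by
      funext k; simp
    calc ∫ k, ph i (k i) ∂μ
        = ∫ k, (∏ l, (if l = i then ph i (k l) else 1)) ∂μ := by rw [← heq]
      _ = ∏ l, ∫ m, (if l = i then ph i m else 1 : ℝ) ∂(P l) :=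
          coord_eq (fun l m => if l = i then ph i m else 1)
      _ = ∏ l, (if l = i then (0:ℝ) else 1) := by
          refine Finset.prod_congr rfl fun l _ => ?_
          by_cases h : l = i
          · subst h; simpa using hph_E l
          · simp [h]
      _ = 0 := by simp
  -- pairs
  have hint2 : ∀ i j, Integrable (fun k : Fin n → ℕ => ph i (k i) * ph j (k j)) μ := by
    intro i j
    have heq : (fun k : Fin n → ℕ => ph i (k i) * ph j (k j))
        = fun k : Fin n → ℕ =>
          ∏ l, ((if l = i then ph i (k l) else 1) * (if l = j then ph j (k l) else 1)) := by
      funext k; rw [Finset.prod_mul_distrib]; simp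
    rw [heq]
    refine coord_int
      (fun l m => (if l = i then ph i m else 1) * (if l = j then ph j m else 1)) fun l => ?_
    by_cases hi : l = i <;> by_cases hj : l = j
    · subst hi; subst hj
      simpa [pow_two] using hph_sq_int l
    · subst hi; simpa [hj] using hph_int l
    · subst hj; simpa [hi] using hph_int l
    · simp only [if_neg hi, if_neg hj, mul_one]; exact integrable_const 1
  have hE2 : ∀ i j, ∫ k, ph i (k i) * ph j (k j) ∂μ
      = if i = j then g i ^ 2 / lam i else 0 := by
    intro i j
    have heq : (fun k : Fin n → ℕ => ph i (k i) * ph j (k j))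
        = fun k : Fin n → ℕ =>
          ∏ l, ((if l = i then ph i (k l) else 1) * (if l = j then ph j (k l) else 1)) := by
      funext k; rw [Finset.prod_mul_distrib]; simp
    have hstep : ∫ k, ph i (k i) * ph j (k j) ∂μ
        = ∏ l, ∫ m, ((if l = i then ph i m else 1) * (if l = j then ph j m else 1) : ℝ)
            ∂(P l) := by
      rw [show (∫ k, ph i (k i) * ph j (k j) ∂μ)
          = ∫ k, (∏ l, ((if l = i then ph i (k l) else 1) * (if l = j then ph j (k l) else 1)))
            ∂μ from congrArg (fun f => ∫ k, f k ∂μ) heq]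
      exact coord_eq
        (fun l m => (if l = i then ph i m else 1) * (if l = j then ph j m else 1))
    rw [hstep]
    by_cases hij : i = j
    · subst hij
      rw [if_pos rfl]
      have hl : ∀ l, ∫ m,
            ((if l = i then ph i m else 1) * (if l = i then ph i m else 1) : ℝ) ∂(P l)
          = if l = i then g i ^ 2 / lam i else 1 := by
        intro l
        by_cases h : l = i
        · subst h; simpa [pow_two] using hph_sq_E l
        · simp [h]
      rw [Finset.prod_congr rfl fun l _ => hl l]
      simp
    · rw [if_neg hij]
      refine Finset.prod_eq_zero (Finset.mem_univ i) ?_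
      simpa [hij] using hph_E i
  -- the score
  set S : (Fin n → ℕ) → ℝ := fun k => ∑ i, ph i (k i) with hSdef
  have hS_int : Integrable S μ := by
    rw [hSdef]; exact integrable_finset_sum _ fun i _ => hint1 i
  have hES : ∫ k, S k ∂μ = 0 := by
    rw [hSdef, integral_finset_sum _ fun i _ => hint1 i]
    simp [hE1]
  have hSsq_eq : (fun k : Fin n → ℕ => S k ^ 2)
      = fun k => ∑ i, ∑ j, ph i (k i) * ph j (k j) := by
    funext k
    rw [hSdef, pow_two, Finset.sum_mul_sum]
  have hS2_int : Integrable (fun k => S k ^ 2) μ := by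
    rw [hSsq_eq]
    exact integrable_finset_sum _ fun i _ => integrable_finset_sum _ fun j _ => hint2 i j
  have hES2 : ∫ k, S k ^ 2 ∂μ = ∑ i, g i ^ 2 / lam i := by
    rw [hSsq_eq, integral_finset_sum _ fun i _ =>
      integrable_finset_sum _ fun j _ => hint2 i j]
    rw [Finset.sum_congr rfl fun i _ => integral_finset_sum _ fun j _ => hint2 i j]
    rw [Finset.sum_congr rfl fun i _ => Finset.sum_congr rfl fun j _ => hE2 i j]
    simp
  have hS_meas : AEStronglyMeasurable S μ := hS_int.aestronglyMeasurable
  have hS_mem : MemLp S 2 μ := (memLp_two_iff_integrable_sq hS_meas).mpr hS2_int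
  -- Cauchy–Schwarz
  set c := ∫ k, Fhat k ∂μ with hc
  have hmemh : MemLp (fun k => Fhat k - c) 2 μ := hmem.sub (memLp_const c)
  have hinth2 : Integrable (fun k => (Fhat k - c) ^ 2) μ := hmemh.integrable_sq
  have hintFS : Integrable (fun k => Fhat k * S k) μ := by
    have h1 : MemLp (Fhat • S) 1 μ :=
      hS_mem.smul hmem (hpqr := ⟨by rw [ENNReal.inv_two_add_inv_two, inv_one]⟩)
    have := memLp_one_iff_integrable.mp h1
    exact this
  have hinthS : Integrable (fun k => (Fhat k - c) * S k) μ := by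
    have heq : (fun k => (Fhat k - c) * S k) = fun k => Fhat k * S k - c * S k := by
      funext k; ring
    rw [heq]; exact hintFS.sub (hS_int.const_mul c)
  have hregS : ∫ k, Fhat k * S k ∂μ = 1 := hreg
  have hEhS : ∫ k, (Fhat k - c) * S k ∂μ = 1 := by
    have heq : (fun k => (Fhat k - c) * S k) = fun k => Fhat k * S k - c * S k := by
      funext k; ring
    rw [heq, integral_sub hintFS (hS_int.const_mul c), integral_const_mul, hES,
      mul_zero, sub_zero, hregS]
  have key : ∀ t : ℝ, 0 ≤ (∫ k, S k ^ 2 ∂μ) * (t * t) + 2 * t + (∫ k, (Fhat k - c) ^ 2 ∂μ) := by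
    intro t
    have i1 : Integrable (fun k => t ^ 2 * S k ^ 2) μ := hS2_int.const_mul _
    have i2 : Integrable (fun k => 2 * t * ((Fhat k - c) * S k)) μ := hinthS.const_mul _
    have i23 : Integrable (fun k => 2 * t * ((Fhat k - c) * S k) + (Fhat k - c) ^ 2) μ :=
      i2.add hinth2
    have expand : (fun k => (t * S k + (Fhat k - c)) ^ 2)
        = fun k => t ^ 2 * S k ^ 2 + (2 * t * ((Fhat k - c) * S k) + (Fhat k - c) ^ 2) := by
      funext k; ring
    have h0 : 0 ≤ ∫ k, (t * S k + (Fhat k - c)) ^ 2 ∂μ :=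
      integral_nonneg fun k => sq_nonneg _
    rw [expand, integral_add i1 i23, integral_add i2 hinth2, integral_const_mul,
      integral_const_mul, hEhS] at h0
    nlinarith [h0]
  have hdisc := discrim_le_zero key
  unfold discrim at hdisc
  have hA0 : 0 ≤ ∫ k, (Fhat k - c) ^ 2 ∂μ := integral_nonneg fun k => sq_nonneg _
  have hC0 : 0 ≤ ∫ k, S k ^ 2 ∂μ := integral_nonneg fun k => sq_nonneg _
  have hCA : 1 ≤ (∫ k, S k ^ 2 ∂μ) * (∫ k, (Fhat k - c) ^ 2 ∂μ) := by nlinarith [hdisc]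
  have hCpos : 0 < ∫ k, S k ^ 2 ∂μ := by nlinarith [hCA, hA0, hC0]
  have hvar : variance Fhat μ = ∫ k, (Fhat k - c) ^ 2 ∂μ := by
    rw [variance_eq_integral hmem.aemeasurable]
  have hCval : ∫ k, S k ^ 2 ∂μ
      = 1 / (2 * π * σ ^ 2 * B)
        * ∑ i, J i ^ 2 / (1 + F / (Real.sqrt (2 * π) * σ * B) * J i) := by
    rw [hES2, ← hpart2]
    exact Finset.sum_congr rfl fun i _ => by rw [hlam i]
  have hD : (0:ℝ) < 2 * π * σ ^ 2 * B := by positivity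
  have hTpos : 0 < ∑ i, J i ^ 2 / (1 + F / (Real.sqrt (2 * π) * σ * B) * J i) := by
    rw [hCval] at hCpos
    have h1 : (0:ℝ) < 1 / (2 * π * σ ^ 2 * B) := by positivity
    by_contra hcon
    push_neg at hcon
    have h2 := mul_le_mul_of_nonneg_left hcon h1.le
    rw [mul_zero] at h2
    linarith
  have hkey : 2 * π * σ ^ 2 * B
      * (∑ i, J i ^ 2 / (1 + F / (Real.sqrt (2 * π) * σ * B) * J i))⁻¹
      = (∫ k, S k ^ 2 ∂μ)⁻¹ := by
    rw [hCval, mul_inv, one_div, inv_inv]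
  rw [hkey, hvar]
  rw [inv_eq_one_div, div_le_iff₀ hCpos]
  nlinarith [hCA]
end

section
/- In the Gaussian observation model with gain, the (1,1) Fisher matrix coefficient for the joint estimation of position and flux satisfies the exact identity 𝓘_{1,1} := E[(∂ ln L/∂x_c)²] = Σ_{i=1}^n (F̃·g_i′(x_c))²/(F̃ g_i(x_c) + B̃) = (1/(2πσ²)) · (G F²/B) · Σ_{i=1}^n (e^{−γ(x_i^− − x_c)} − e^{−γ(x_i^+ − x_c)})² / (1 + (1/(√(2π)σ))·(F/B)·J_i(x_c)), where γ(x) = x²/(2σ²), x_i^± = x_i ± Δx/2, and J_i(x_c) = ∫_{x_i^−}^{x_i^+} e^{−γ(x−x_c)} dx. -/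
open MeasureTheory ProbabilityTheory Real
open scoped ENNReal NNReal Nat

lemma pmf_integrable (p : PMF ℕ) (f : ℕ → ℝ) (hf : ∀ n, 0 ≤ f n)
    (h : Summable (fun n => f n * (p n).toReal)) : Integrable f p.toMeasure := by
  constructor
  · exact (measurable_from_nat (f := f)).aestronglyMeasurable
  · rw [HasFiniteIntegral]
    rw [lintegral_countable' _]
    have key : ∀ a : ℕ, ‖f a‖ₑ * p.toMeasure {a} = ENNReal.ofReal (f a * (p a).toReal) := by
      intro a
      rw [PMF.toMeasure_apply_singleton _ _ (measurableSet_singleton a),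
        Real.enorm_eq_ofReal (hf a), ENNReal.ofReal_mul (hf a),
        ENNReal.ofReal_toReal (PMF.apply_ne_top p a)]
    simp_rw [key]
    rw [← ENNReal.ofReal_tsum_of_nonneg (fun n => mul_nonneg (hf n) ENNReal.toReal_nonneg) h]
    exact ENNReal.ofReal_lt_top

lemma pmf_integral (p : PMF ℕ) (f : ℕ → ℝ) (hf : Integrable f p.toMeasure) :
    ∫ a, f a ∂p.toMeasure = ∑' n, f n * (p n).toReal := by
  rw [PMF.integral_eq_tsum _ _ hf]
  simp_rw [smul_eq_mul, mul_comm]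

lemma poisson_hasSum_one (r : ℝ≥0) : HasSum (fun n => poissonPMFReal r n) 1 :=
  poissonPMFRealSum r

lemma poisson_hasSum_id (r : ℝ≥0) :
    HasSum (fun n : ℕ => (n : ℝ) * poissonPMFReal r n) r := by
  have hshift : ∀ n : ℕ, ((n + 1 : ℕ) : ℝ) * poissonPMFReal r (n + 1)
      = (r : ℝ) * poissonPMFReal r n := by
    intro n
    unfold poissonPMFReal
    rw [Nat.factorial_succ, pow_succ]
    push_cast
    have hn : ((n : ℝ) + 1) ≠ 0 := by positivity
    have hf : (n ! : ℝ) ≠ 0 := by positivity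
    field_simp
  have h1 : HasSum (fun n => (r : ℝ) * poissonPMFReal r n) ((r : ℝ) * 1) :=
    (poissonPMFRealSum r).mul_left _
  rw [mul_one] at h1
  have h2 : HasSum (fun n : ℕ => ((n + 1 : ℕ) : ℝ) * poissonPMFReal r (n + 1)) (r : ℝ) := by
    simpa only [hshift] using h1
  have := (hasSum_nat_add_iff (f := fun n : ℕ => (n : ℝ) * poissonPMFReal r n) 1).mp h2
  simpa using this

lemma poisson_hasSum_sq (r : ℝ≥0) :
    HasSum (fun n : ℕ => (n : ℝ) ^ 2 * poissonPMFReal r n) ((r : ℝ) ^ 2 + r) := by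
  have hfac : HasSum (fun n : ℕ => (n : ℝ) * ((n : ℝ) - 1) * poissonPMFReal r n) ((r : ℝ) ^ 2) := by
    have hshift : ∀ n : ℕ, ((n + 2 : ℕ) : ℝ) * (((n + 2 : ℕ) : ℝ) - 1) * poissonPMFReal r (n + 2)
        = (r : ℝ) ^ 2 * poissonPMFReal r n := by
      intro n
      unfold poissonPMFReal
      rw [show n + 2 = (n + 1) + 1 by ring, Nat.factorial_succ, Nat.factorial_succ,
        pow_succ, pow_succ]
      push_cast
      have hn : ((n : ℝ) + 1) ≠ 0 := by positivity
      have hn2 : ((n : ℝ) + 1 + 1) ≠ 0 := by positivity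
      have hf : (n ! : ℝ) ≠ 0 := by positivity
      field_simp
      ring
    have h1 : HasSum (fun n => (r : ℝ) ^ 2 * poissonPMFReal r n) ((r : ℝ) ^ 2 * 1) :=
      (poissonPMFRealSum r).mul_left _
    rw [mul_one] at h1
    have h2 : HasSum (fun n : ℕ => ((n + 2 : ℕ) : ℝ) * (((n + 2 : ℕ) : ℝ) - 1)
        * poissonPMFReal r (n + 2)) ((r : ℝ) ^ 2) := by
      simpa only [hshift] using h1
    have := (hasSum_nat_add_iff
      (f := fun n : ℕ => (n : ℝ) * ((n : ℝ) - 1) * poissonPMFReal r n) 2).mp h2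
    simpa [Finset.sum_range_succ] using this
  have := hfac.add (poisson_hasSum_id r)
  have heq : (fun n : ℕ => (n : ℝ) * ((n : ℝ) - 1) * poissonPMFReal r n
      + (n : ℝ) * poissonPMFReal r n) = fun n : ℕ => (n : ℝ) ^ 2 * poissonPMFReal r n := by
    funext n; ring
  rwa [heq] at this

lemma poissonPMF_toReal (r : ℝ≥0) (n : ℕ) :
    ((poissonPMF r) n).toReal = poissonPMFReal r n := by
  have h : (poissonPMF r) n = ENNReal.ofReal (poissonPMFReal r n) := rfl
  rw [h]
  exact ENNReal.toReal_ofReal poissonPMFReal_nonneg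

lemma poisson_integrable_id (r : ℝ≥0) :
    Integrable (fun n : ℕ => (n : ℝ)) (poissonMeasure r) := by
  rw [integrable_poissonMeasure_iff]
  refine (poisson_hasSum_id r).summable.congr fun n => ?_
  rw [Real.norm_natCast, poissonPMFReal, mul_comm]

lemma poisson_integral_id (r : ℝ≥0) :
    ∫ n, (n : ℝ) ∂poissonMeasure r = r := by
  rw [integral_poissonMeasure' (poisson_integrable_id r)]
  refine Eq.trans ?_ (poisson_hasSum_id r).tsum_eq
  congr 1; funext n; rw [smul_eq_mul, poissonPMFReal, mul_comm]

lemma poisson_integrable_sq (r : ℝ≥0) :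
    Integrable (fun n : ℕ => (n : ℝ) ^ 2) (poissonMeasure r) := by
  rw [integrable_poissonMeasure_iff]
  refine (poisson_hasSum_sq r).summable.congr fun n => ?_
  rw [norm_pow, Real.norm_natCast, poissonPMFReal, mul_comm]

lemma poisson_integral_sq (r : ℝ≥0) :
    ∫ n, (n : ℝ) ^ 2 ∂poissonMeasure r = (r : ℝ) ^ 2 + r := by
  rw [integral_poissonMeasure' (poisson_integrable_sq r), ← (poisson_hasSum_sq r).tsum_eq]
  congr 1; funext n; rw [smul_eq_mul, poissonPMFReal, mul_comm]

-- centered versions for λ > 0 real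
lemma poisson_Y_integrable (lam : ℝ) (hl : 0 < lam) (a : ℝ) :
    Integrable (fun m : ℕ => a * ((m : ℝ) / lam - 1)) (poissonMeasure lam.toNNReal) := by
  have h1 : (fun m : ℕ => a * ((m : ℝ) / lam - 1))
      = fun m : ℕ => (a / lam) * (m : ℝ) - a := by funext m; field_simp
  rw [h1]
  exact ((poisson_integrable_id _).const_mul _).sub (integrable_const a)

lemma poisson_Y_integral (lam : ℝ) (hl : 0 < lam) (a : ℝ) :
    ∫ m, a * ((m : ℝ) / lam - 1) ∂poissonMeasure lam.toNNReal = 0 := by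
  have hr : ((lam.toNNReal : ℝ≥0) : ℝ) = lam := Real.coe_toNNReal _ hl.le
  have h1 : (fun m : ℕ => a * ((m : ℝ) / lam - 1))
      = fun m : ℕ => (a / lam) * (m : ℝ) - a := by funext m; field_simp
  have hA : Integrable (fun m : ℕ => (a / lam) * (m : ℝ)) (poissonMeasure lam.toNNReal) :=
    (poisson_integrable_id _).const_mul _
  rw [h1, integral_sub hA (integrable_const a), integral_const_mul, poisson_integral_id, hr,
    integral_const]
  simp
  field_simp
  ring

lemma poisson_Ysq_integrable (lam : ℝ) (hl : 0 < lam) (a : ℝ) :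
    Integrable (fun m : ℕ => (a * ((m : ℝ) / lam - 1)) ^ 2) (poissonMeasure lam.toNNReal) := by
  have h1 : (fun m : ℕ => (a * ((m : ℝ) / lam - 1)) ^ 2)
      = fun m : ℕ => (a ^ 2 / lam ^ 2) * (m : ℝ) ^ 2
        - (2 * a ^ 2 / lam) * (m : ℝ) + a ^ 2 := by funext m; field_simp; ring
  rw [h1]
  exact (((poisson_integrable_sq _).const_mul _).sub
    ((poisson_integrable_id _).const_mul _)).add (integrable_const _)

lemma poisson_Ysq_integral (lam : ℝ) (hl : 0 < lam) (a : ℝ) :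
    ∫ m, (a * ((m : ℝ) / lam - 1)) ^ 2 ∂poissonMeasure lam.toNNReal = a ^ 2 / lam := by
  have hr : ((lam.toNNReal : ℝ≥0) : ℝ) = lam := Real.coe_toNNReal _ hl.le
  have h1 : (fun m : ℕ => (a * ((m : ℝ) / lam - 1)) ^ 2)
      = fun m : ℕ => (a ^ 2 / lam ^ 2) * (m : ℝ) ^ 2
        - (2 * a ^ 2 / lam) * (m : ℝ) + a ^ 2 := by funext m; field_simp; ring
  have hA : Integrable (fun m : ℕ => (a ^ 2 / lam ^ 2) * (m : ℝ) ^ 2) (poissonMeasure lam.toNNReal) :=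
    (poisson_integrable_sq _).const_mul _
  have hB : Integrable (fun m : ℕ => (2 * a ^ 2 / lam) * (m : ℝ)) (poissonMeasure lam.toNNReal) :=
    (poisson_integrable_id _).const_mul _
  have hAB : Integrable (fun m : ℕ => (a ^ 2 / lam ^ 2) * (m : ℝ) ^ 2
      - (2 * a ^ 2 / lam) * (m : ℝ)) (poissonMeasure lam.toNNReal) := hA.sub hB
  rw [h1, integral_add hAB (integrable_const _), integral_sub hA hB,
    integral_const_mul, integral_const_mul, poisson_integral_sq, poisson_integral_id, hr,
    integral_const]
  simp
  field_simp
  ring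

noncomputable def msOf (m : Measure ℕ) : MeasureSpace ℕ := { volume := m }

lemma pi_key (n : ℕ) (ν : Fin n → Measure ℕ) (hprob : ∀ i, IsProbabilityMeasure (ν i))
    (f : Fin n → ℕ → ℝ) (hf : ∀ i, Integrable (f i) (ν i)) :
    (Integrable (fun k : Fin n → ℕ => ∏ i, f i (k i)) (Measure.pi ν)) ∧
    ∫ k : Fin n → ℕ, ∏ i, f i (k i) ∂Measure.pi ν = ∏ i, ∫ m, f i m ∂ν i := by
  have hsf : ∀ i : Fin n, @SigmaFinite ℕ _ (@volume ℕ (msOf (ν i))) := by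
    intro i
    haveI := hprob i
    exact inferInstanceAs (SigmaFinite (ν i))
  constructor
  · haveI : ∀ i, SigmaFinite (ν i) := hsf
    have := Integrable.fintype_prod_dep hf
    exact this
  · haveI : ∀ i, SigmaFinite (ν i) := hsf
    have := MeasureTheory.integral_fintype_prod_eq_prod (μ := ν) f
    exact this

lemma pi_sum_sq (n : ℕ) (ν : Fin n → Measure ℕ) (hprob : ∀ i, IsProbabilityMeasure (ν i))
    (Y : Fin n → ℕ → ℝ) (hY1 : ∀ i, Integrable (Y i) (ν i))
    (hY2 : ∀ i, Integrable (fun m => Y i m ^ 2) (ν i))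
    (hm : ∀ i, ∫ m, Y i m ∂ν i = 0) :
    ∫ k, (∑ i, Y i (k i)) ^ 2 ∂Measure.pi ν = ∑ i, ∫ m, Y i m ^ 2 ∂ν i := by
  classical
  haveI : IsProbabilityMeasure (Measure.pi ν) := by infer_instance
  -- the factor functions
  set f : Fin n → Fin n → Fin n → ℕ → ℝ :=
    fun i j l => fun m => (if l = i then Y i m else 1) * (if l = j then Y j m else 1) with hf
  have hfint : ∀ i j l, Integrable (f i j l) (ν l) := by
    intro i j l
    by_cases hi : l = i
    · subst hi
      by_cases hj : l = j
      · subst hj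
        have h : f l l l = fun m => Y l m ^ 2 := by funext m; simp [hf, pow_two]
        rw [h]; exact hY2 l
      · have h : f l j l = Y l := by funext m; simp [hf, hj]
        rw [h]; exact hY1 l
    · by_cases hj : l = j
      · subst hj
        have h : f i l l = Y l := by funext m; simp [hf, hi]
        rw [h]; exact hY1 l
      · have h : f i j l = fun _ => (1:ℝ) := by funext m; simp [hf, hi, hj]
        rw [h]; exact integrable_const 1
  have hprod : ∀ (i j : Fin n) (k : Fin n → ℕ), (∏ l, f i j l (k l)) = Y i (k i) * Y j (k j) := by
    intro i j k
    simp only [hf]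
    rw [Finset.prod_mul_distrib]
    rw [Finset.prod_ite_eq' Finset.univ i (fun l => Y i (k l)),
      Finset.prod_ite_eq' Finset.univ j (fun l => Y j (k l))]
    simp
  have hterm_int : ∀ i j, Integrable (fun k : Fin n → ℕ => Y i (k i) * Y j (k j)) (Measure.pi ν) := by
    intro i j
    have := (pi_key n ν hprob (f i j) (hfint i j)).1
    simp_rw [hprod i j] at this
    exact this
  have hterm_val : ∀ i j, ∫ k, Y i (k i) * Y j (k j) ∂Measure.pi ν
      = if i = j then ∫ m, Y i m ^ 2 ∂ν i else 0 := by
    intro i j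
    have hkey := (pi_key n ν hprob (f i j) (hfint i j)).2
    simp_rw [hprod i j] at hkey
    rw [hkey]
    by_cases hij : i = j
    · subst hij
      rw [if_pos rfl]
      have hval : ∀ l, ∫ m, f i i l m ∂ν l = if l = i then ∫ m, Y i m ^ 2 ∂ν i else 1 := by
        intro l
        by_cases hl : l = i
        · subst hl
          rw [if_pos rfl]
          have h : f l l l = fun m => Y l m ^ 2 := by funext m; simp [hf, pow_two]
          rw [h]
        · rw [if_neg hl]
          have h : f i i l = fun _ => (1:ℝ) := by funext m; simp [hf, hl]
          rw [h]
          haveI := hprob l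
          simp
      simp_rw [hval]
      rw [Finset.prod_ite_eq' Finset.univ i (fun l => ∫ m, Y i m ^ 2 ∂ν i)]
      simp
    · rw [if_neg hij]
      apply Finset.prod_eq_zero (Finset.mem_univ i)
      have h : f i j i = Y i := by funext m; simp [hf, hij]
      rw [h, hm i]
  calc ∫ k, (∑ i, Y i (k i)) ^ 2 ∂Measure.pi ν
      = ∫ k, ∑ i, ∑ j, Y i (k i) * Y j (k j) ∂Measure.pi ν := by
        congr 1; funext k; rw [sq, Finset.sum_mul_sum]
    _ = ∑ i, ∑ j, ∫ k, Y i (k i) * Y j (k j) ∂Measure.pi ν := by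
        rw [integral_finset_sum _ (fun i _ => integrable_finset_sum _ (fun j _ => hterm_int i j))]
        exact Finset.sum_congr rfl fun i _ =>
          integral_finset_sum _ (fun j _ => hterm_int i j)
    _ = ∑ i, ∑ j, (if i = j then ∫ m, Y i m ^ 2 ∂ν i else 0) := by
        simp_rw [hterm_val]
    _ = ∑ i, ∫ m, Y i m ^ 2 ∂ν i := by
        simp

lemma gauss_deriv (σ : ℝ) (hσ : 0 < σ) (a b : ℝ) (c : ℝ) :
    ∀ xc : ℝ, HasDerivAt (fun t => ∫ x in a..b, c * Real.exp (-(x - t) ^ 2 / (2 * σ ^ 2)))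
      (c * (Real.exp (-(a - xc) ^ 2 / (2 * σ ^ 2)) - Real.exp (-(b - xc) ^ 2 / (2 * σ ^ 2)))) xc := by
  intro xc
  set ph : ℝ → ℝ := fun u => Real.exp (-u ^ 2 / (2 * σ ^ 2)) with hph
  have hphc : Continuous ph := by fun_prop
  set Ph : ℝ → ℝ := fun y => ∫ x in (0:ℝ)..y, ph x with hPhdef
  have hPh : ∀ y, HasDerivAt Ph (ph y) y := by
    intro y
    exact intervalIntegral.integral_hasDerivAt_right (hphc.intervalIntegrable _ _)
      (hphc.stronglyMeasurable.stronglyMeasurableAtFilter) hphc.continuousAt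
  have hrepr : (fun t : ℝ => ∫ x in a..b, c * Real.exp (-(x - t) ^ 2 / (2 * σ ^ 2)))
      = fun t => c * (Ph (b - t) - Ph (a - t)) := by
    funext t
    rw [intervalIntegral.integral_const_mul]
    congr 1
    have h1 : (∫ x in a..b, Real.exp (-(x - t) ^ 2 / (2 * σ ^ 2))) = ∫ x in (a-t)..(b-t), ph x := by
      have := intervalIntegral.integral_comp_sub_right (a := a) (b := b) ph t
      simp only [hph] at this ⊢
      exact this
    rw [h1, ← intervalIntegral.integral_interval_sub_left (hphc.intervalIntegrable _ _)
      (hphc.intervalIntegrable _ _)]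
  rw [hrepr]
  have hb : HasDerivAt (fun t : ℝ => Ph (b - t)) (ph (b - xc) * (-1)) xc :=
    (hPh (b - xc)).comp xc (((hasDerivAt_id xc).const_sub b))
  have ha : HasDerivAt (fun t : ℝ => Ph (a - t)) (ph (a - xc) * (-1)) xc :=
    (hPh (a - xc)).comp xc (((hasDerivAt_id xc).const_sub a))
  have := (hb.sub ha).const_mul c
  convert this using 1
  · rfl
  · rfl
  · rfl
  simp only [hph]
  ring

lemma fisher_alg (c j E G F B : ℝ) (hc : 0 < c) (hG : 0 < G) (hF : 0 < F) (hB : 0 < B)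
    (hj : 0 ≤ j) :
    (G * F * (c * E)) ^ 2 / (G * F * (c * j) + G * B)
      = c ^ 2 * (G * F ^ 2 / B) * (E ^ 2 / (1 + c * (F / B) * j)) := by
  have h1 : 0 < G * F * (c * j) + G * B := by
    have : 0 ≤ G * F * (c * j) := by positivity
    nlinarith
  have h2 : 0 < 1 + c * (F / B) * j := by
    have : 0 ≤ c * (F / B) * j := by positivity
    linarith
  field_simp
  ring

/-- **Exact (1,1) Fisher coefficient for joint astrometry and photometry.**
In the Gaussian model with gain `G` (`F̃ = G F`, `B̃ = G B`, uniform background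
`B̃ > 0`), `𝓘₁₁ = E[(∂ ln L/∂x_c)²] = Σ (F̃ g i′(x_c))²/(F̃ g i(x_c) + B̃)
= (1/(2πσ²)) (G F²/B) Σ (e^{−γ(x_i⁻−x_c)} − e^{−γ(x_i⁺−x_c)})² /
(1 + (1/(√(2π)σ))(F/B) J i)`. -/
theorem stmt_5
    (n : ℕ) (σ Δx : ℝ) (hσ : 0 < σ) (hΔx : 0 < Δx)
    (xpix : Fin n → ℝ) (xc : ℝ)
    (G F B Ftil Btil : ℝ) (hG : 0 < G) (hFt : 0 < Ftil) (hBt : 0 < Btil)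
    (hFdef : Ftil = G * F) (hBdef : Btil = G * B)
    (g : Fin n → ℝ → ℝ)
    (hg : ∀ i t, g i t = ∫ x in (xpix i - Δx / 2)..(xpix i + Δx / 2),
        (1 / (Real.sqrt (2 * π) * σ)) * Real.exp (-(x - t) ^ 2 / (2 * σ ^ 2)))
    (J : Fin n → ℝ)
    (hJ : ∀ i, J i = ∫ x in (xpix i - Δx / 2)..(xpix i + Δx / 2),
        Real.exp (-(x - xc) ^ 2 / (2 * σ ^ 2)))
    (lam : Fin n → ℝ) (hlam : ∀ i, lam i = Ftil * g i xc + Btil)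
    (μ : Measure (Fin n → ℕ))
    (hμ : μ = Measure.pi fun i => poissonMeasure (lam i).toNNReal) :
    (∫ k, (∑ i, Ftil * deriv (g i) xc * ((k i : ℝ) / lam i - 1)) ^ 2 ∂μ
        = ∑ i, (Ftil * deriv (g i) xc) ^ 2 / (Ftil * g i xc + Btil)) ∧
    ∑ i, (Ftil * deriv (g i) xc) ^ 2 / (Ftil * g i xc + Btil)
      = (1 / (2 * π * σ ^ 2)) * (G * F ^ 2 / B) *
        ∑ i, (Real.exp (-((xpix i - Δx / 2) - xc) ^ 2 / (2 * σ ^ 2)) -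
              Real.exp (-((xpix i + Δx / 2) - xc) ^ 2 / (2 * σ ^ 2))) ^ 2 /
            (1 + (1 / (Real.sqrt (2 * π) * σ)) * (F / B) * J i) := by
  have hπ : (0:ℝ) < π := Real.pi_pos
  set c : ℝ := 1 / (Real.sqrt (2 * π) * σ) with hc_def
  have hsq : (0:ℝ) < Real.sqrt (2 * π) := Real.sqrt_pos.mpr (by positivity)
  have hc : 0 < c := by rw [hc_def]; positivity
  have hc2 : c ^ 2 = 1 / (2 * π * σ ^ 2) := by
    rw [hc_def, div_pow, mul_pow, Real.sq_sqrt (by positivity : (0:ℝ) ≤ 2 * π)]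
    norm_num
  -- derivative of g i
  have hderiv : ∀ i, deriv (g i) xc
      = c * (Real.exp (-((xpix i - Δx / 2) - xc) ^ 2 / (2 * σ ^ 2))
           - Real.exp (-((xpix i + Δx / 2) - xc) ^ 2 / (2 * σ ^ 2))) := by
    intro i
    have hgi : g i = fun t => ∫ x in (xpix i - Δx / 2)..(xpix i + Δx / 2),
        c * Real.exp (-(x - t) ^ 2 / (2 * σ ^ 2)) := funext (hg i)
    rw [hgi]
    exact (gauss_deriv σ hσ _ _ c xc).deriv
  -- g i xc = c * J i
  have hgJ : ∀ i, g i xc = c * J i := by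
    intro i
    rw [hg i xc, hJ i, intervalIntegral.integral_const_mul]
  have hJnn : ∀ i, 0 ≤ J i := by
    intro i
    rw [hJ i]
    apply intervalIntegral.integral_nonneg (by linarith)
    intro x _
    positivity
  have hlampos : ∀ i, 0 < lam i := by
    intro i
    rw [hlam i, hgJ i]
    have h1 : 0 ≤ Ftil * (c * J i) := mul_nonneg hFt.le (mul_nonneg hc.le (hJnn i))
    linarith
  have hB : 0 < B := by
    rw [hBdef] at hBt
    nlinarith
  have hF : 0 < F := by
    rw [hFdef] at hFt
    nlinarith
  constructor
  · -- Fisher information computation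
    subst hμ
    have hmain := pi_sum_sq n (fun i => poissonMeasure (lam i).toNNReal)
      (fun i => inferInstance)
      (fun i m => (Ftil * deriv (g i) xc) * ((m : ℝ) / lam i - 1))
      (fun i => poisson_Y_integrable (lam i) (hlampos i) _)
      (fun i => poisson_Ysq_integrable (lam i) (hlampos i) _)
      (fun i => poisson_Y_integral (lam i) (hlampos i) _)
    rw [hmain]
    refine Finset.sum_congr rfl fun i _ => ?_
    rw [poisson_Ysq_integral (lam i) (hlampos i) _, hlam i]
  · -- algebraic identity
    rw [Finset.mul_sum]
    refine Finset.sum_congr rfl fun i _ => ?_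
    rw [hderiv i, hgJ i, ← hc2]
    subst hFdef hBdef
    exact fisher_alg c (J i) _ G F B hc hG hF hB (hJnn i)
end

section
/- Let σ > 0, x_c ∈ ℝ, and r ∈ [0,1). For Δx > 0 define pixel centers x_i = (i + r)·Δx for i ∈ ℤ and pixel flux fractions g_i(x_c) = ∫_{x_i−Δx/2}^{x_i+Δx/2} Φ(x − x_c) dx, where Φ(x) = (1/(√(2π)σ)) e^{−x²/(2σ²)}. Then the sums Σ_{i∈ℤ} (x_i − x_c)²·g_i(x_c) converge, and lim_{Δx→0⁺} Σ_{i∈ℤ} (x_i − x_c)²·g_i(x_c) = σ². -/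
open Real Filter Topology MeasureTheory Set


lemma aux_int_sq_gauss {b : ℝ} (hb : 0 < b) :
    ∫ x : ℝ, x ^ 2 * exp (-b * x ^ 2) = (2 * b)⁻¹ * Real.sqrt (π / b) := by
  have hint2 : Integrable fun x : ℝ => x ^ 2 * exp (-b * x ^ 2) := by
    simpa [Real.rpow_two] using integrable_rpow_mul_exp_neg_mul_sq hb (s := 2) (by norm_num)
  have hinte : Integrable fun x : ℝ => exp (-b * x ^ 2) := integrable_exp_neg_mul_sq hb
  have heven : ∫ x : ℝ, x ^ 2 * exp (-b * x ^ 2)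
      = 2 * ∫ x in Ioi (0:ℝ), x ^ 2 * exp (-b * x ^ 2) := by
    rw [← integral_comp_abs (f := fun x : ℝ => x ^ 2 * exp (-b * x ^ 2))]
    simp [sq_abs]
  have hderiv : ∀ x : ℝ, HasDerivAt (fun x : ℝ => -(2 * b)⁻¹ * (x * exp (-b * x ^ 2)))
      (x ^ 2 * exp (-b * x ^ 2) - (2 * b)⁻¹ * exp (-b * x ^ 2)) x := by
    intro x
    have h1 : HasDerivAt (fun x : ℝ => -b * x ^ 2) (-b * (2 * x)) x := by
      simpa using ((hasDerivAt_pow 2 x).const_mul (-b))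
    have := ((hasDerivAt_id x).mul h1.exp).const_mul (-(2 * b)⁻¹)
    refine this.congr_deriv ?_
    have hb0 : b ≠ 0 := hb.ne'
    simp only [id_eq]
    field_simp
    ring
  have htends : Tendsto (fun x : ℝ => -(2 * b)⁻¹ * (x * exp (-b * x ^ 2))) atTop (𝓝 0) := by
    have ho := rpow_mul_exp_neg_mul_sq_isLittleO_exp_neg hb 1
    have hlin : Tendsto (fun x : ℝ => -(1/2 : ℝ) * x) atTop atBot :=
      Tendsto.const_mul_atTop_of_neg (by norm_num) tendsto_id
    have hg : Tendsto (fun x : ℝ => exp (-(1/2 : ℝ) * x)) atTop (𝓝 0) :=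
      tendsto_exp_atBot.comp hlin
    have h0 : Tendsto (fun x : ℝ => x ^ (1:ℝ) * exp (-b * x ^ 2)) atTop (𝓝 0) :=
      ho.isBigO.trans_tendsto hg
    have h0' : Tendsto (fun x : ℝ => x * exp (-b * x ^ 2)) atTop (𝓝 0) := by
      refine h0.congr' ?_
      filter_upwards [eventually_gt_atTop (0:ℝ)] with x hx
      rw [Real.rpow_one]
    simpa using h0'.const_mul (-(2 * b)⁻¹)
  have hIoi : ∫ x in Ioi (0:ℝ), (x ^ 2 * exp (-b * x ^ 2) - (2 * b)⁻¹ * exp (-b * x ^ 2)) = 0 := by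
    have := integral_Ioi_of_hasDerivAt_of_tendsto'
      (f := fun x : ℝ => -(2 * b)⁻¹ * (x * exp (-b * x ^ 2)))
      (a := 0) (fun x _ => hderiv x)
      ((hint2.sub (hinte.const_mul _)).integrableOn) htends
    simpa using this
  have hsubint := integral_sub (hint2.integrableOn (s := Ioi (0:ℝ)))
      ((hinte.const_mul ((2*b)⁻¹)).integrableOn (s := Ioi (0:ℝ)))
  rw [hIoi] at hsubint
  rw [integral_const_mul] at hsubint
  have hsub : ∫ x in Ioi (0:ℝ), x ^ 2 * exp (-b * x ^ 2)
      = (2 * b)⁻¹ * ∫ x in Ioi (0:ℝ), exp (-b * x ^ 2) := by linarith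
  rw [heven, hsub, integral_gaussian_Ioi]
  ring

lemma aux_moment {σ : ℝ} (hσ : 0 < σ) :
    ∫ x : ℝ, x ^ 2 * ((1 / (Real.sqrt (2 * π) * σ)) * exp (-x ^ 2 / (2 * σ ^ 2))) = σ ^ 2 := by
  have hb : (0:ℝ) < (2 * σ ^ 2)⁻¹ := by positivity
  have hexp : ∀ x : ℝ, exp (-x ^ 2 / (2 * σ ^ 2)) = exp (-(2 * σ ^ 2)⁻¹ * x ^ 2) := by
    intro x; congr 1; field_simp
  have h2pi : (0:ℝ) ≤ 2 * π := by positivity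
  have hsqrt : Real.sqrt (π / (2 * σ ^ 2)⁻¹) = Real.sqrt (2 * π) * σ := by
    rw [show π / (2 * σ ^ 2)⁻¹ = (2 * π) * σ ^ 2 by field_simp]
    rw [Real.sqrt_mul h2pi, Real.sqrt_sq hσ.le]
  have hrw : ∀ x : ℝ, x ^ 2 * ((1 / (Real.sqrt (2 * π) * σ)) * exp (-x ^ 2 / (2 * σ ^ 2)))
      = (1 / (Real.sqrt (2 * π) * σ)) * (x ^ 2 * exp (-(2 * σ ^ 2)⁻¹ * x ^ 2)) := by
    intro x; rw [hexp]; ring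
  simp_rw [hrw]
  rw [integral_const_mul, aux_int_sq_gauss hb, hsqrt]
  have hs : Real.sqrt (2 * π) > 0 := Real.sqrt_pos.mpr (by positivity)
  field_simp

noncomputable def gpdf (σ : ℝ) (u : ℝ) : ℝ :=
  (1 / (Real.sqrt (2 * π) * σ)) * Real.exp (-u ^ 2 / (2 * σ ^ 2))

lemma gpdf_nonneg {σ : ℝ} (hσ : 0 < σ) (u : ℝ) : 0 ≤ gpdf σ u := by
  unfold gpdf; positivity

lemma gpdf_continuous (σ : ℝ) : Continuous (gpdf σ) := by
  unfold gpdf; fun_prop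

lemma gpdf_eq {σ : ℝ} (hσ : 0 < σ) (u : ℝ) :
    gpdf σ u = (1 / (Real.sqrt (2 * π) * σ)) * Real.exp (-(2 * σ ^ 2)⁻¹ * u ^ 2) := by
  unfold gpdf
  congr 2
  field_simp

lemma integrable_gpdf {σ : ℝ} (hσ : 0 < σ) : Integrable (gpdf σ) := by
  have hb : (0:ℝ) < (2 * σ ^ 2)⁻¹ := by positivity
  have := (integrable_exp_neg_mul_sq hb).const_mul (1 / (Real.sqrt (2 * π) * σ))
  exact this.congr (by filter_upwards with u; rw [gpdf_eq hσ])

lemma integrable_abs_gpdf {σ : ℝ} (hσ : 0 < σ) : Integrable (fun u => |u| * gpdf σ u) := by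
  have hb : (0:ℝ) < (2 * σ ^ 2)⁻¹ := by positivity
  have h1 : Integrable (fun u : ℝ => |u * Real.exp (-(2 * σ ^ 2)⁻¹ * u ^ 2)|) :=
    (integrable_mul_exp_neg_mul_sq hb).abs
  have := h1.const_mul (1 / (Real.sqrt (2 * π) * σ))
  exact this.congr (by
    filter_upwards with u
    rw [gpdf_eq hσ, abs_mul, abs_of_pos (exp_pos _)]
    ring)

lemma integrable_sq_gpdf {σ : ℝ} (hσ : 0 < σ) : Integrable (fun u => u ^ 2 * gpdf σ u) := by
  have hb : (0:ℝ) < (2 * σ ^ 2)⁻¹ := by positivity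
  have h1 : Integrable fun u : ℝ => u ^ 2 * Real.exp (-(2 * σ ^ 2)⁻¹ * u ^ 2) := by
    simpa [Real.rpow_two] using integrable_rpow_mul_exp_neg_mul_sq hb (s := 2) (by norm_num)
  have := h1.const_mul (1 / (Real.sqrt (2 * π) * σ))
  exact this.congr (by filter_upwards with u; rw [gpdf_eq hσ]; ring)

lemma integrable_weight {σ : ℝ} (hσ : 0 < σ) (c xc : ℝ) :
    Integrable (fun x : ℝ => (|x - xc| + c) ^ 2 * gpdf σ (x - xc)) := by
  have h : Integrable (fun u : ℝ => (|u| + c) ^ 2 * gpdf σ u) := by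
    have := ((integrable_sq_gpdf hσ).add ((integrable_abs_gpdf hσ).const_mul (2 * c))).add
      ((integrable_gpdf hσ).const_mul (c ^ 2))
    exact this.congr (by
      filter_upwards with u
      have : (|u| + c) ^ 2 = u ^ 2 + 2 * c * |u| + c ^ 2 := by
        rw [add_sq, sq_abs]; ring
      simp only [Pi.add_apply]
      rw [this]; ring)
  exact h.comp_sub_right xc

lemma mem_pixel_iff {Δ : ℝ} (hΔ : 0 < Δ) (r x : ℝ) (i : ℤ) :
    x ∈ Set.Ico (((i:ℝ) + r) * Δ - Δ / 2) (((i:ℝ) + r) * Δ + Δ / 2)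
      ↔ ⌊x / Δ - r + 1 / 2⌋ = i := by
  rw [Set.mem_Ico, Int.floor_eq_iff]
  constructor
  · rintro ⟨h1, h2⟩
    have ha : ((i:ℝ) + r - 1/2) ≤ x / Δ := (le_div_iff₀ hΔ).mpr (by linarith)
    have hb : x / Δ < ((i:ℝ) + r + 1/2) := (div_lt_iff₀ hΔ).mpr (by linarith)
    constructor <;> [skip; push_cast] <;> linarith
  · rintro ⟨h1, h2⟩
    have ha : ((i:ℝ) + r - 1/2) * Δ ≤ x := (le_div_iff₀ hΔ).mp (by linarith)
    have hb : x < ((i:ℝ) + r + 1/2) * Δ := (div_lt_iff₀ hΔ).mp (by push_cast at h2; linarith)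
    constructor <;> nlinarith

/-- The pixel-center function. -/
noncomputable def pcen (r Δ x : ℝ) : ℝ := ((⌊x / Δ - r + 1 / 2⌋ : ℤ) + r) * Δ

lemma pcen_mem {Δ : ℝ} (hΔ : 0 < Δ) (r x : ℝ) :
    pcen r Δ x - Δ / 2 ≤ x ∧ x < pcen r Δ x + Δ / 2 := by
  have := (mem_pixel_iff hΔ r x ⌊x / Δ - r + 1 / 2⌋).mpr rfl
  exact ⟨this.1, this.2⟩

lemma pcen_measurable {Δ : ℝ} (r : ℝ) : Measurable (pcen r Δ) := by
  unfold pcen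
  apply Measurable.mul_const
  apply Measurable.add_const
  exact measurable_from_top.comp
    (((measurable_id.div_const Δ).sub_const r).add_const (1/2)).floor

lemma phi_measurable {σ Δ : ℝ} (r xc : ℝ) :
    Measurable (fun x => (pcen r Δ x - xc) ^ 2 * gpdf σ (x - xc)) :=
  (((pcen_measurable r).sub_const xc).pow_const 2).mul
    ((gpdf_continuous σ).measurable.comp (measurable_id.sub_const xc))

lemma phi_integrable_s9 {σ Δ : ℝ} (hσ : 0 < σ) (hΔ : 0 < Δ) (r xc : ℝ) :
    Integrable (fun x => (pcen r Δ x - xc) ^ 2 * gpdf σ (x - xc)) := by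
  refine (integrable_weight hσ Δ xc).mono' (phi_measurable r xc).aestronglyMeasurable ?_
  filter_upwards with x
  have hmem := pcen_mem hΔ r x
  have h1 : |pcen r Δ x - xc| ≤ |x - xc| + Δ := by
    have : |pcen r Δ x - x| ≤ Δ / 2 := by
      rw [abs_le]; constructor <;> linarith [hmem.1, hmem.2]
    calc |pcen r Δ x - xc| ≤ |pcen r Δ x - x| + |x - xc| := abs_sub_le _ _ _
    _ ≤ |x - xc| + Δ := by linarith
  rw [Real.norm_eq_abs, abs_mul, abs_of_nonneg (gpdf_nonneg hσ _), abs_pow]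
  refine mul_le_mul_of_nonneg_right ?_ (gpdf_nonneg hσ _)
  calc |pcen r Δ x - xc| ^ 2 ≤ (|x - xc| + Δ) ^ 2 := by
        apply pow_le_pow_left₀ (abs_nonneg _) h1
  _ = (|x - xc| + Δ) ^ 2 := rfl

lemma pixel_hasSum {σ xc r Δ : ℝ} (hσ : 0 < σ) (hΔ : 0 < Δ) :
    HasSum (fun i : ℤ => (((i:ℝ) + r) * Δ - xc) ^ 2 *
        ∫ x in (((i:ℝ) + r) * Δ - Δ / 2)..(((i:ℝ) + r) * Δ + Δ / 2), gpdf σ (x - xc))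
      (∫ x : ℝ, (pcen r Δ x - xc) ^ 2 * gpdf σ (x - xc)) := by
  set s : ℤ → Set ℝ := fun i => Ico (((i:ℝ)+r)*Δ - Δ/2) (((i:ℝ)+r)*Δ + Δ/2) with hs
  have hmeas : ∀ i, MeasurableSet (s i) := fun i => measurableSet_Ico
  have hdisj : Pairwise (Function.onFun Disjoint s) := by
    intro i j hij
    rw [Function.onFun, Set.disjoint_left]
    intro x hxi hxj
    exact hij (((mem_pixel_iff hΔ r x i).mp hxi).symm.trans ((mem_pixel_iff hΔ r x j).mp hxj))
  have hunion : ⋃ i, s i = univ := by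
    ext x
    simp only [mem_iUnion, mem_univ, iff_true]
    exact ⟨⌊x/Δ - r + 1/2⌋, (mem_pixel_iff hΔ r x _).mpr rfl⟩
  have H := hasSum_integral_iUnion hmeas hdisj
    ((phi_integrable_s9 hσ hΔ r xc).integrableOn (s := ⋃ i, s i))
  rw [hunion, Measure.restrict_univ] at H
  have hfun : ∀ i : ℤ, (∫ x in s i, (pcen r Δ x - xc) ^ 2 * gpdf σ (x - xc))
      = (((i:ℝ) + r) * Δ - xc) ^ 2 *
        ∫ x in (((i:ℝ) + r) * Δ - Δ / 2)..(((i:ℝ) + r) * Δ + Δ / 2), gpdf σ (x - xc) := by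
    intro i
    have hstep : ∫ x in s i, (pcen r Δ x - xc) ^ 2 * gpdf σ (x - xc)
        = ∫ x in s i, (((i:ℝ) + r) * Δ - xc) ^ 2 * gpdf σ (x - xc) := by
      refine setIntegral_congr_fun (hmeas i) (fun x hx => ?_)
      have : ⌊x/Δ - r + 1/2⌋ = i := (mem_pixel_iff hΔ r x i).mp hx
      rw [pcen, this]
    rw [hstep, integral_const_mul,
      intervalIntegral.integral_of_le (by linarith : ((i:ℝ)+r)*Δ - Δ/2 ≤ ((i:ℝ)+r)*Δ + Δ/2)]
    rw [show s i = Ico (((i:ℝ)+r)*Δ - Δ/2) (((i:ℝ)+r)*Δ + Δ/2) from rfl,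
      integral_Ico_eq_integral_Ioo, integral_Ioc_eq_integral_Ioo]
  have : (fun i : ℤ => ∫ x in s i, (pcen r Δ x - xc) ^ 2 * gpdf σ (x - xc))
      = fun i : ℤ => (((i:ℝ) + r) * Δ - xc) ^ 2 *
        ∫ x in (((i:ℝ) + r) * Δ - Δ / 2)..(((i:ℝ) + r) * Δ + Δ / 2), gpdf σ (x - xc) :=
    funext hfun
  rwa [this] at H

lemma phi_norm_le {σ Δ c : ℝ} (hσ : 0 < σ) (hΔ : 0 < Δ) (hc : Δ ≤ c) (r xc x : ℝ) :
    ‖(pcen r Δ x - xc) ^ 2 * gpdf σ (x - xc)‖ ≤ (|x - xc| + c) ^ 2 * gpdf σ (x - xc) := by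
  have hmem := pcen_mem hΔ r x
  have h1 : |pcen r Δ x - xc| ≤ |x - xc| + c := by
    have h2 : |pcen r Δ x - x| ≤ Δ / 2 := by
      rw [abs_le]; constructor <;> linarith [hmem.1, hmem.2]
    calc |pcen r Δ x - xc| ≤ |pcen r Δ x - x| + |x - xc| := abs_sub_le _ _ _
    _ ≤ |x - xc| + c := by linarith
  rw [Real.norm_eq_abs, abs_mul, abs_of_nonneg (gpdf_nonneg hσ _), abs_pow]
  exact mul_le_mul_of_nonneg_right (pow_le_pow_left₀ (abs_nonneg _) h1 2) (gpdf_nonneg hσ _)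

/-- **High-resolution limit: second moment of the pixelated Gaussian.**
For pixels of size `Δx` centered at `x_i = (i+r)Δx`, `i ∈ ℤ`, with Gaussian
flux fractions `g_i(x_c)`, the sums `Σ_{i∈ℤ} (x_i − x_c)² g_i(x_c)` converge
and tend to `σ²` as `Δx → 0⁺`. -/
theorem stmt_9
    (σ xc r : ℝ) (hσ : 0 < σ) (hr : r ∈ Set.Ico (0 : ℝ) 1)
    (g : ℝ → ℤ → ℝ)
    (hg : ∀ Δx : ℝ, ∀ i : ℤ, g Δx i =
      ∫ x in (((i : ℝ) + r) * Δx - Δx / 2)..(((i : ℝ) + r) * Δx + Δx / 2),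
        (1 / (Real.sqrt (2 * π) * σ)) * Real.exp (-(x - xc) ^ 2 / (2 * σ ^ 2))) :
    (∀ Δx : ℝ, 0 < Δx →
      Summable fun i : ℤ => (((i : ℝ) + r) * Δx - xc) ^ 2 * g Δx i) ∧
    Tendsto (fun Δx : ℝ => ∑' i : ℤ, (((i : ℝ) + r) * Δx - xc) ^ 2 * g Δx i)
      (𝓝[>] 0) (𝓝 (σ ^ 2)) := by
  have hfterm : ∀ Δx : ℝ, ∀ i : ℤ,
      (((i:ℝ) + r) * Δx - xc) ^ 2 * g Δx i
        = (((i:ℝ) + r) * Δx - xc) ^ 2 *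
          ∫ x in (((i:ℝ) + r) * Δx - Δx / 2)..(((i:ℝ) + r) * Δx + Δx / 2),
            gpdf σ (x - xc) := by
    intro Δx i
    rw [hg]
    rfl
  constructor
  · intro Δx hΔx
    exact ((pixel_hasSum (xc := xc) (r := r) hσ hΔx).summable).congr
      (fun i => (hfterm Δx i).symm)
  · have hval : ∫ x : ℝ, (x - xc) ^ 2 * gpdf σ (x - xc) = σ ^ 2 := by
      rw [integral_sub_right_eq_self (fun u => u ^ 2 * gpdf σ u) xc]
      simpa [gpdf] using aux_moment hσ
    have htendsto : Tendsto
        (fun Δ : ℝ => ∫ x : ℝ, (pcen r Δ x - xc) ^ 2 * gpdf σ (x - xc))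
        (𝓝[>] 0) (𝓝 (σ ^ 2)) := by
      have hmain := MeasureTheory.tendsto_integral_filter_of_dominated_convergence
        (μ := (volume : Measure ℝ)) (l := 𝓝[>] (0:ℝ))
        (F := fun Δ x => (pcen r Δ x - xc) ^ 2 * gpdf σ (x - xc))
        (f := fun x => (x - xc) ^ 2 * gpdf σ (x - xc))
        (bound := fun x => (|x - xc| + 1) ^ 2 * gpdf σ (x - xc))
        (Eventually.of_forall fun Δ => (phi_measurable r xc).aestronglyMeasurable)
        ?_ (integrable_weight hσ 1 xc) ?_
      · rwa [hval] at hmain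
      · filter_upwards [Ioo_mem_nhdsGT_of_mem (by norm_num : (0:ℝ) ∈ Ico (0:ℝ) 1)]
          with Δ hΔ
        exact Eventually.of_forall fun x => phi_norm_le hσ hΔ.1 hΔ.2.le r xc x
      · refine Eventually.of_forall fun x => ?_
        have hlow : Tendsto (fun Δ : ℝ => x - Δ / 2) (𝓝[>] 0) (𝓝 x) := by
          have : Tendsto (fun Δ : ℝ => x - Δ / 2) (𝓝 0) (𝓝 (x - 0 / 2)) :=
            (tendsto_id.div_const 2).const_sub x
          simpa using this.mono_left nhdsWithin_le_nhds
        have hhigh : Tendsto (fun Δ : ℝ => x + Δ / 2) (𝓝[>] 0) (𝓝 x) := by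
          have : Tendsto (fun Δ : ℝ => x + Δ / 2) (𝓝 0) (𝓝 (x + 0 / 2)) :=
            (tendsto_id.div_const 2).const_add x
          simpa using this.mono_left nhdsWithin_le_nhds
        have hpc : Tendsto (fun Δ : ℝ => pcen r Δ x) (𝓝[>] 0) (𝓝 x) := by
          refine tendsto_of_tendsto_of_tendsto_of_le_of_le' hlow hhigh ?_ ?_
          · filter_upwards [self_mem_nhdsWithin] with Δ hΔ
            have := (pcen_mem hΔ r x).2; linarith
          · filter_upwards [self_mem_nhdsWithin] with Δ hΔ
            have := (pcen_mem hΔ r x).1; linarith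
        exact ((hpc.sub_const xc).pow 2).mul_const _
    refine htendsto.congr' ?_
    filter_upwards [self_mem_nhdsWithin] with Δ (hΔ : Δ ∈ Ioi 0)
    calc ∫ x : ℝ, (pcen r Δ x - xc) ^ 2 * gpdf σ (x - xc)
        = ∑' i : ℤ, (((i:ℝ) + r) * Δ - xc) ^ 2 *
            ∫ x in (((i:ℝ) + r) * Δ - Δ / 2)..(((i:ℝ) + r) * Δ + Δ / 2),
              gpdf σ (x - xc) := ((pixel_hasSum (xc := xc) (r := r) hσ hΔ).tsum_eq).symm
    _ = ∑' i : ℤ, (((i:ℝ) + r) * Δ - xc) ^ 2 * g Δ i := tsum_congr fun i => (hfterm Δ i).symm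
end

section
/- Let σ > 0, x_c ∈ ℝ, r ∈ [0,1), and k ∈ ℕ with k ≥ 1. For Δx > 0 define pixel centers x_i = (i + r)·Δx for i ∈ ℤ and g_i(x_c) = ∫_{x_i−Δx/2}^{x_i+Δx/2} Φ(x − x_c) dx, where Φ(x) = (1/(√(2π)σ)) e^{−x²/(2σ²)}. Then lim_{Δx→0⁺} (1/Δx^{k−1})·Σ_{i∈ℤ} (x_i − x_c)·g_i(x_c)^k = 0; that is, in the high-resolution limit every sum of a power of g_i modulated by the odd factor (x_i − x_c) vanishes at the appropriate normalization. -/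
open Real Filter Topology MeasureTheory Set

namespace Stmt10

noncomputable def phi (σ xc : ℝ) (x : ℝ) : ℝ :=
  (1 / (Real.sqrt (2 * π) * σ)) * Real.exp (-(x - xc) ^ 2 / (2 * σ ^ 2))

lemma C_pos {σ : ℝ} (hσ : 0 < σ) : 0 < 1 / (Real.sqrt (2 * π) * σ) := by
  have h : 0 < Real.sqrt (2 * π) := Real.sqrt_pos.2 (by positivity)
  positivity

lemma phi_nonneg {σ : ℝ} (hσ : 0 < σ) (xc x : ℝ) : 0 ≤ phi σ xc x :=
  mul_nonneg (C_pos hσ).le (Real.exp_pos _).le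

lemma phi_le {σ : ℝ} (hσ : 0 < σ) (xc x : ℝ) :
    phi σ xc x ≤ 1 / (Real.sqrt (2 * π) * σ) := by
  have h1 : Real.exp (-(x - xc) ^ 2 / (2 * σ ^ 2)) ≤ 1 := by
    rw [Real.exp_le_one_iff]
    exact div_nonpos_of_nonpos_of_nonneg (neg_nonpos.mpr (sq_nonneg _)) (by positivity)
  calc phi σ xc x ≤ (1 / (Real.sqrt (2 * π) * σ)) * 1 :=
        mul_le_mul_of_nonneg_left h1 (C_pos hσ).le
    _ = _ := mul_one _

lemma continuous_phi (σ xc : ℝ) : Continuous (phi σ xc) := by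
  unfold phi; fun_prop

lemma phi_hasDerivAt (σ xc x : ℝ) :
    HasDerivAt (phi σ xc)
      ((1 / (Real.sqrt (2 * π) * σ)) *
        (Real.exp (-(x - xc) ^ 2 / (2 * σ ^ 2)) * (-(2 * (x - xc)) / (2 * σ ^ 2)))) x := by
  have h1 : HasDerivAt (fun x : ℝ => -(x - xc) ^ 2 / (2 * σ ^ 2))
      (-(2 * (x - xc)) / (2 * σ ^ 2)) x := by
    have h2 : HasDerivAt (fun x : ℝ => (x - xc) ^ 2) (2 * (x - xc)) x := by
      simpa using ((hasDerivAt_id x).sub_const xc).fun_pow 2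
    exact (h2.neg).div_const (2 * σ ^ 2)
  exact (h1.exp).const_mul _

lemma phi_lip {σ : ℝ} (hσ : 0 < σ) (xc x y : ℝ) :
    |phi σ xc y - phi σ xc x| ≤ (1 / (Real.sqrt (2 * π) * σ) / σ) * |y - x| := by
  have C_pos : 0 < 1 / (Real.sqrt (2 * π) * σ) := C_pos hσ
  have texp_le : ∀ t : ℝ, |t| * Real.exp (-t ^ 2 / (2 * σ ^ 2)) ≤ σ := by
    intro t
    have hE := Real.add_one_le_exp (t ^ 2 / (2 * σ ^ 2))
    have hEpos : (0:ℝ) < Real.exp (t ^ 2 / (2 * σ ^ 2)) := Real.exp_pos _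
    have hneg : Real.exp (-t ^ 2 / (2 * σ ^ 2)) =
        (Real.exp (t ^ 2 / (2 * σ ^ 2)))⁻¹ := by
      rw [← Real.exp_neg]; ring_nf
    rw [hneg, mul_inv_le_iff₀ hEpos]
    have hu : t ^ 2 / (2 * σ ^ 2) * (2 * σ ^ 2) = t ^ 2 := by field_simp
    nlinarith [sq_nonneg (|t| - σ), sq_abs t, mul_le_mul_of_nonneg_left hE hσ.le]
  have := Convex.norm_image_sub_le_of_norm_hasDerivWithin_le
    (f := phi σ xc)
    (f' := fun x => (1 / (Real.sqrt (2 * π) * σ)) *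
        (Real.exp (-(x - xc) ^ 2 / (2 * σ ^ 2)) * (-(2 * (x - xc)) / (2 * σ ^ 2))))
    (s := Set.univ)
    (fun x _ => (phi_hasDerivAt σ xc x).hasDerivWithinAt)
    (C := 1 / (Real.sqrt (2 * π) * σ) / σ) ?_ convex_univ (Set.mem_univ x) (Set.mem_univ y)
  · simpa [Real.norm_eq_abs] using this
  · intro z _
    rw [Real.norm_eq_abs]
    have hz := texp_le (z - xc)
    have hE : (0:ℝ) < Real.exp (-(z - xc) ^ 2 / (2 * σ ^ 2)) := Real.exp_pos _
    have habs : |(1 / (Real.sqrt (2 * π) * σ)) *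
        (Real.exp (-(z - xc) ^ 2 / (2 * σ ^ 2)) * (-(2 * (z - xc)) / (2 * σ ^ 2)))|
        = (1 / (Real.sqrt (2 * π) * σ)) *
          (Real.exp (-(z - xc) ^ 2 / (2 * σ ^ 2)) * (|z - xc| / σ ^ 2)) := by
      rw [abs_mul, abs_of_pos C_pos, abs_mul, abs_of_pos hE, abs_div]
      congr 1
      congr 1
      rw [abs_of_pos (by positivity : (0:ℝ) < 2 * σ ^ 2)]
      rw [abs_neg, abs_mul, abs_two]
      field_simp
    rw [habs]
    rw [div_div]
    rw [le_div_iff₀ (by positivity)]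
    have key : Real.exp (-(z - xc) ^ 2 / (2 * σ ^ 2)) * |z - xc| ≤ σ := by
      rw [mul_comm]; exact hz
    calc (1 / (Real.sqrt (2 * π) * σ)) *
          (Real.exp (-(z - xc) ^ 2 / (2 * σ ^ 2)) * (|z - xc| / σ ^ 2)) *
          (Real.sqrt (2 * π) * σ * σ)
        = (1 / (Real.sqrt (2 * π) * σ)) * (Real.sqrt (2 * π) * σ) *
            (Real.exp (-(z - xc) ^ 2 / (2 * σ ^ 2)) * |z - xc|) * (σ / σ ^ 2) := by ring
      _ ≤ 1 * 1 * σ * (σ / σ ^ 2) := by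
          have h1 : (1 / (Real.sqrt (2 * π) * σ)) * (Real.sqrt (2 * π) * σ) = 1 := by
            field_simp
          rw [h1]
          have h2 : σ / σ ^ 2 ≥ 0 := by positivity
          nlinarith [key, Real.exp_pos (-(z - xc) ^ 2 / (2 * σ ^ 2))]
      _ = 1 := by field_simp

lemma int_nonneg {σ : ℝ} (hσ : 0 < σ) (xc : ℝ) {a b : ℝ} (hab : a ≤ b) :
    0 ≤ ∫ x in a..b, phi σ xc x :=
  intervalIntegral.integral_nonneg hab (fun x _ => phi_nonneg hσ xc x)

lemma int_le {σ : ℝ} (hσ : 0 < σ) (xc : ℝ) {a b : ℝ} (hab : a ≤ b) :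
    ∫ x in a..b, phi σ xc x ≤ (1 / (Real.sqrt (2 * π) * σ)) * (b - a) := by
  have h := intervalIntegral.norm_integral_le_of_norm_le_const
    (C := 1 / (Real.sqrt (2 * π) * σ)) (f := phi σ xc) (a := a) (b := b)
    (fun x _ => by rw [Real.norm_eq_abs, abs_of_nonneg (phi_nonneg hσ xc x)]; exact phi_le hσ xc x)
  rw [Real.norm_eq_abs, abs_of_nonneg (sub_nonneg.2 hab)] at h
  calc ∫ x in a..b, phi σ xc x ≤ |∫ x in a..b, phi σ xc x| := le_abs_self _
    _ ≤ _ := by rw [← Real.norm_eq_abs]; rw [mul_comm] at h ⊢; exact h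

lemma int_near {σ : ℝ} (hσ : 0 < σ) (xc : ℝ) {a b x : ℝ} (hx1 : a ≤ x) (hx2 : x ≤ b) :
    |(∫ y in a..b, phi σ xc y) - (b - a) * phi σ xc x|
      ≤ (1 / (Real.sqrt (2 * π) * σ) / σ) * (b - a) ^ 2 := by
  have hab : a ≤ b := le_trans hx1 hx2
  have heq : (∫ y in a..b, phi σ xc y) - (b - a) * phi σ xc x
      = ∫ y in a..b, (phi σ xc y - phi σ xc x) := by
    rw [intervalIntegral.integral_sub ((continuous_phi σ xc).intervalIntegrable a b)
      (intervalIntegrable_const)]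
    rw [intervalIntegral.integral_const, smul_eq_mul]
  rw [heq]
  have h := intervalIntegral.norm_integral_le_of_norm_le_const
    (C := (1 / (Real.sqrt (2 * π) * σ) / σ) * (b - a))
    (f := fun y => phi σ xc y - phi σ xc x) (a := a) (b := b) ?_
  · rw [Real.norm_eq_abs, abs_of_nonneg (sub_nonneg.2 hab)] at h
    calc |∫ y in a..b, (phi σ xc y - phi σ xc x)| ≤ _ := h
      _ = _ := by ring
  · intro y hy
    rw [Set.uIoc_of_le hab] at hy
    rw [Real.norm_eq_abs]
    calc |phi σ xc y - phi σ xc x| ≤ (1 / (Real.sqrt (2 * π) * σ) / σ) * |y - x| :=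
          phi_lip hσ xc x y
      _ ≤ (1 / (Real.sqrt (2 * π) * σ) / σ) * (b - a) := by
          have hC : (0:ℝ) ≤ 1 / (Real.sqrt (2 * π) * σ) / σ := by
            have h : 0 < Real.sqrt (2 * π) := Real.sqrt_pos.2 (by positivity)
            positivity
          apply mul_le_mul_of_nonneg_left _ hC
          rw [abs_le]
          constructor <;> [linarith [hy.1.le, hx2]; linarith [hy.2, hx1]]

lemma integrable_phi {σ : ℝ} (hσ : 0 < σ) (xc : ℝ) : Integrable (phi σ xc) := by
  have hb : (0:ℝ) < 1 / (2 * σ ^ 2) := by positivity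
  have h := ((integrable_exp_neg_mul_sq hb).comp_sub_right xc).const_mul
    (1 / (Real.sqrt (2 * π) * σ))
  apply h.congr
  · filter_upwards with x
    unfold phi
    congr 1
    congr 1
    field_simp

lemma integrable_absmul_phi {σ : ℝ} (hσ : 0 < σ) (xc d : ℝ) :
    Integrable (fun x => (|x - xc| + d) * phi σ xc x) := by
  have hb : (0:ℝ) < 1 / (2 * σ ^ 2) := by positivity
  have h1 : Integrable (fun x : ℝ => (|x| + d) * Real.exp (-(1 / (2 * σ ^ 2)) * x ^ 2)) := by
    have ha := (integrable_mul_exp_neg_mul_sq hb).abs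
    have hb2 := integrable_exp_neg_mul_sq hb
    have := ha.add (hb2.const_mul d)
    apply this.congr
    filter_upwards with x
    simp only [Pi.add_apply]
    rw [abs_mul, abs_of_pos (Real.exp_pos _)]
    ring
  have h2 := (h1.comp_sub_right xc).const_mul (1 / (Real.sqrt (2 * π) * σ))
  apply h2.congr
  filter_upwards with x
  unfold phi
  have : -(x - xc) ^ 2 / (2 * σ ^ 2) = -(1 / (2 * σ ^ 2)) * (x - xc) ^ 2 := by field_simp
  rw [this]
  ring

lemma odd_integral {σ : ℝ} (hσ : 0 < σ) (xc : ℝ) (k : ℕ) :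
    ∫ x, (x - xc) * phi σ xc x ^ k = 0 := by
  have hpow : ∀ x : ℝ, phi σ xc x ^ k =
      (1 / (Real.sqrt (2 * π) * σ)) ^ k * Real.exp (-(k : ℝ) * (x - xc) ^ 2 / (2 * σ ^ 2)) := by
    intro x
    unfold phi
    rw [mul_pow, ← Real.exp_nat_mul]
    congr 2
    ring
  set h : ℝ → ℝ := fun u =>
    u * ((1 / (Real.sqrt (2 * π) * σ)) ^ k * Real.exp (-(k : ℝ) * u ^ 2 / (2 * σ ^ 2))) with hh
  have h1 : ∫ x, (x - xc) * phi σ xc x ^ k = ∫ x, h (x - xc) := by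
    congr 1; funext x; rw [hpow]
  have h2 : ∫ x, h (x - xc) = ∫ x, h x := integral_sub_right_eq_self h xc
  have h3 : ∫ x, h x = 0 := by
    have hodd : ∀ x : ℝ, h (-x) = -h x := by
      intro x; simp only [hh]; ring_nf
    have hsym := integral_neg_eq_self h (μ := volume)
    have e1 : ∫ x, h (-x) = -∫ x, h x := by
      simp_rw [hodd]; exact integral_neg h
    linarith [hsym, e1]
  rw [h1, h2, h3]

lemma floor_iff {r Δx : ℝ} (hΔ : 0 < Δx) (x : ℝ) (i : ℤ) :
    ⌊x / Δx - r + 1/2⌋ = i ↔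
      (((i:ℝ) + r) * Δx - Δx/2 ≤ x ∧ x < ((i:ℝ) + r) * Δx + Δx/2) := by
  rw [Int.floor_eq_iff]
  have e1 : ((i:ℝ) ≤ x / Δx - r + 1/2) ↔ (((i:ℝ) + r) * Δx - Δx/2 ≤ x) := by
    rw [show ((i:ℝ) ≤ x / Δx - r + 1/2) ↔ ((i:ℝ) + r - 1/2 ≤ x / Δx) from
      ⟨fun h => by linarith, fun h => by linarith⟩]
    rw [le_div_iff₀ hΔ]
    constructor <;> intro h <;> nlinarith
  have e2 : (x / Δx - r + 1/2 < (i:ℝ) + 1) ↔ (x < ((i:ℝ) + r) * Δx + Δx/2) := by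
    rw [show (x / Δx - r + 1/2 < (i:ℝ) + 1) ↔ (x / Δx < (i:ℝ) + r + 1/2) from
      ⟨fun h => by linarith, fun h => by linarith⟩]
    rw [div_lt_iff₀ hΔ]
    constructor <;> intro h <;> nlinarith
  rw [e1, e2]

end Stmt10

open Stmt10

/-- **High-resolution limit: odd moments vanish.**  For pixels of size `Δx`
centered at `x_i = (i+r)Δx` with Gaussian flux fractions `g_i(x_c)`, and any
`k ≥ 1`, `(1/Δx^{k−1}) Σ_{i∈ℤ} (x_i − x_c) g_i(x_c)^k → 0` as `Δx → 0⁺`. -/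
theorem stmt_10
    (σ xc r : ℝ) (hσ : 0 < σ) (hr : r ∈ Set.Ico (0 : ℝ) 1)
    (k : ℕ) (hk : 1 ≤ k)
    (g : ℝ → ℤ → ℝ)
    (hg : ∀ Δx : ℝ, ∀ i : ℤ, g Δx i =
      ∫ x in (((i : ℝ) + r) * Δx - Δx / 2)..(((i : ℝ) + r) * Δx + Δx / 2),
        (1 / (Real.sqrt (2 * π) * σ)) * Real.exp (-(x - xc) ^ 2 / (2 * σ ^ 2))) :
    Tendsto (fun Δx : ℝ =>
        (1 / Δx ^ (k - 1)) * ∑' i : ℤ, (((i : ℝ) + r) * Δx - xc) * g Δx i ^ k)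
      (𝓝[>] 0) (𝓝 0) := by
  classical
  obtain ⟨hr0, hr1⟩ := hr
  have hCpos : 0 < 1 / (Real.sqrt (2 * π) * σ) := C_pos hσ
  set C : ℝ := 1 / (Real.sqrt (2 * π) * σ) with hCdef
  set m : ℕ := k - 1 with hmdef
  have hmk : m + 1 = k := Nat.succ_pred_eq_of_pos hk
  have hg' : ∀ Δx : ℝ, ∀ i : ℤ, g Δx i =
      ∫ x in (((i:ℝ)+r)*Δx - Δx/2)..(((i:ℝ)+r)*Δx + Δx/2), phi σ xc x := hg
  set J : ℝ → ℝ → ℤ := fun Δx x => ⌊x / Δx - r + 1/2⌋ with hJdef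
  set F : ℝ → ℝ → ℝ := fun Δx x =>
    (((J Δx x : ℝ) + r) * Δx - xc) * (g Δx (J Δx x) / Δx) ^ m * phi σ xc x with hFdef
  -- bounds on g
  have hab : ∀ (Δx : ℝ), 0 < Δx → ∀ i : ℤ,
      (((i:ℝ)+r)*Δx - Δx/2) ≤ (((i:ℝ)+r)*Δx + Δx/2) := by
    intro Δx hΔ i; linarith
  have hg_nonneg : ∀ (Δx : ℝ), 0 < Δx → ∀ i : ℤ, 0 ≤ g Δx i := by
    intro Δx hΔ i; rw [hg']; exact int_nonneg hσ xc (hab Δx hΔ i)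
  have hg_le : ∀ (Δx : ℝ), 0 < Δx → ∀ i : ℤ, g Δx i ≤ C * Δx := by
    intro Δx hΔ i
    rw [hg']
    have := int_le hσ xc (hab Δx hΔ i)
    calc (∫ x in (((i:ℝ)+r)*Δx - Δx/2)..(((i:ℝ)+r)*Δx + Δx/2), phi σ xc x)
        ≤ C * ((((i:ℝ)+r)*Δx + Δx/2) - ((((i:ℝ)+r)*Δx - Δx/2))) := this
      _ = C * Δx := by ring_nf
  -- membership characterization
  have hmem : ∀ (Δx : ℝ), 0 < Δx → ∀ (x : ℝ) (i : ℤ), J Δx x = i ↔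
      x ∈ Set.Ico ((((i:ℝ)+r)*Δx - Δx/2)) ((((i:ℝ)+r)*Δx + Δx/2)) := by
    intro Δx hΔ x i
    rw [hJdef]
    simp only
    rw [Stmt10.floor_iff hΔ x i]
    exact Iff.rfl
  have hself : ∀ (Δx : ℝ), 0 < Δx → ∀ x : ℝ,
      ((((J Δx x:ℝ))+r)*Δx - Δx/2) ≤ x ∧ x < ((((J Δx x:ℝ))+r)*Δx + Δx/2) := by
    intro Δx hΔ x
    have := (hmem Δx hΔ x (J Δx x)).1 rfl
    exact ⟨this.1, this.2⟩
  -- measurability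
  have hmeasF : ∀ (Δx : ℝ), 0 < Δx → Measurable (F Δx) := by
    intro Δx hΔ
    have hJm : Measurable (J Δx) := by
      apply Int.measurable_floor.comp
      exact ((measurable_id.div_const Δx).sub_const r).add_const (1/2)
    have h1 : Measurable (fun x => ((J Δx x : ℝ))) :=
      (measurable_from_top (f := fun i : ℤ => (i:ℝ))).comp hJm
    have h2 : Measurable (fun x => g Δx (J Δx x)) :=
      (measurable_from_top (f := fun i : ℤ => g Δx i)).comp hJm
    exact (((h1.add_const r).mul_const Δx).sub_const xc).mul
      ((h2.div_const Δx).pow_const m) |>.mul (continuous_phi σ xc).measurable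
  -- the key identity
  have key : ∀ (Δx : ℝ), 0 < Δx →
      (1 / Δx ^ m) * ∑' i : ℤ, (((i : ℝ) + r) * Δx - xc) * g Δx i ^ k
        = ∫ x, F Δx x := by
    intro Δx hΔ
    set s : ℤ → Set ℝ := fun i =>
      Set.Ico ((((i:ℝ)+r)*Δx - Δx/2)) ((((i:ℝ)+r)*Δx + Δx/2)) with hsdef
    set f : ℝ → ℝ := fun x =>
      (((J Δx x : ℝ) + r) * Δx - xc) * g Δx (J Δx x) ^ m * phi σ xc x with hfdef
    have hFf : ∀ x, F Δx x = (1 / Δx ^ m) * f x := by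
      intro x
      simp only [hFdef, hfdef, div_pow]
      ring
    have hfm : Measurable f := by
      have hJm : Measurable (J Δx) := by
        apply Int.measurable_floor.comp
        exact ((measurable_id.div_const Δx).sub_const r).add_const (1/2)
      have h1 : Measurable (fun x => ((J Δx x : ℝ))) :=
        (measurable_from_top (f := fun i : ℤ => (i:ℝ))).comp hJm
      have h2 : Measurable (fun x => g Δx (J Δx x)) :=
        (measurable_from_top (f := fun i : ℤ => g Δx i)).comp hJm
      exact (((h1.add_const r).mul_const Δx).sub_const xc).mul
        (h2.pow_const m) |>.mul (continuous_phi σ xc).measurable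
    have hfb : ∀ x, |f x| ≤ (C * Δx) ^ m * ((|x - xc| + Δx/2) * phi σ xc x) := by
      intro x
      have hS := hself Δx hΔ x
      have hc : |(((J Δx x : ℝ)) + r) * Δx - xc| ≤ |x - xc| + Δx/2 := by
        have h1 : |(((J Δx x : ℝ)) + r) * Δx - x| ≤ Δx/2 := by
          rw [abs_le]; constructor <;> [linarith [hS.2]; linarith [hS.1]]
        calc |(((J Δx x : ℝ)) + r) * Δx - xc|
            = |((((J Δx x : ℝ)) + r) * Δx - x) + (x - xc)| := by ring_nf
          _ ≤ |(((J Δx x : ℝ)) + r) * Δx - x| + |x - xc| := abs_add_le _ _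
          _ ≤ |x - xc| + Δx/2 := by linarith
      have hgp : |g Δx (J Δx x) ^ m| ≤ (C * Δx) ^ m := by
        rw [abs_pow]
        apply pow_le_pow_left₀ (abs_nonneg _)
        rw [abs_of_nonneg (hg_nonneg Δx hΔ _)]
        exact hg_le Δx hΔ _
      calc |f x| = |(((J Δx x : ℝ)) + r) * Δx - xc| * |g Δx (J Δx x) ^ m| *
            |phi σ xc x| := by rw [hfdef]; simp [abs_mul]
        _ ≤ (|x - xc| + Δx/2) * (C * Δx) ^ m * |phi σ xc x| := by
            apply mul_le_mul_of_nonneg_right _ (abs_nonneg _)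
            exact mul_le_mul hc hgp (abs_nonneg _) (by positivity)
        _ = (C * Δx) ^ m * ((|x - xc| + Δx/2) * phi σ xc x) := by
            rw [abs_of_nonneg (phi_nonneg hσ xc x)]; ring
    have hfi : Integrable f := by
      apply Integrable.mono' (((integrable_absmul_phi hσ xc (Δx/2)).const_mul
        ((C * Δx) ^ m))) hfm.aestronglyMeasurable
      filter_upwards with x
      rw [Real.norm_eq_abs]
      exact hfb x
    have hmS : ∀ i, MeasurableSet (s i) := fun i => measurableSet_Ico
    have hd : Pairwise (Function.onFun Disjoint s) := by
      intro i j hij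
      rw [Function.onFun, Set.disjoint_left]
      intro x hxi hxj
      exact hij (((hmem Δx hΔ x i).2 hxi).symm.trans ((hmem Δx hΔ x j).2 hxj))
    have hU : (⋃ i, s i) = Set.univ := by
      apply Set.eq_univ_of_forall
      intro x
      exact Set.mem_iUnion.2 ⟨J Δx x, (hmem Δx hΔ x (J Δx x)).1 rfl⟩
    have hsum : ∫ x, f x = ∑' i : ℤ, ∫ x in s i, f x := by
      rw [← MeasureTheory.setIntegral_univ, ← hU]
      exact MeasureTheory.integral_iUnion hmS hd (hU ▸ hfi.integrableOn)
    have hint : ∀ i : ℤ, ∫ x in s i, f x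
        = (((i : ℝ) + r) * Δx - xc) * g Δx i ^ k := by
      intro i
      have hcongr : ∫ x in s i, f x = ∫ x in s i,
          ((((i : ℝ) + r) * Δx - xc) * g Δx i ^ m) * phi σ xc x := by
        apply MeasureTheory.setIntegral_congr_fun (hmS i)
        intro x hx
        have hJx : J Δx x = i := (hmem Δx hΔ x i).2 hx
        rw [hfdef]
        simp only [hJx]
      rw [hcongr, MeasureTheory.integral_const_mul]
      have hphi : ∫ x in s i, phi σ xc x = g Δx i := by
        rw [hg', intervalIntegral.integral_of_le (hab Δx hΔ i)]
        rw [hsdef]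
        rw [MeasureTheory.integral_Ico_eq_integral_Ioo,
          ← MeasureTheory.integral_Ioc_eq_integral_Ioo]
      rw [hphi, ← hmk, pow_succ]
      ring
    calc (1 / Δx ^ m) * ∑' i : ℤ, (((i : ℝ) + r) * Δx - xc) * g Δx i ^ k
        = (1 / Δx ^ m) * ∫ x, f x := by
          rw [hsum]; congr 1; exact (tsum_congr hint).symm
      _ = ∫ x, F Δx x := by
          rw [show (fun x => F Δx x) = fun x => (1 / Δx ^ m) * f x from funext hFf]
          exact (MeasureTheory.integral_const_mul _ _).symm
  -- dominated convergence
  have hbound_int : Integrable (fun x => C ^ m * ((|x - xc| + 1) * phi σ xc x)) :=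
    (integrable_absmul_phi hσ xc 1).const_mul _
  have hDCT : Tendsto (fun Δx => ∫ x, F Δx x) (𝓝[>] (0:ℝ))
      (𝓝 (∫ x, (x - xc) * phi σ xc x ^ k)) := by
    apply MeasureTheory.tendsto_integral_filter_of_dominated_convergence
      (bound := fun x => C ^ m * ((|x - xc| + 1) * phi σ xc x))
    · filter_upwards [self_mem_nhdsWithin] with Δx hΔ
      exact (hmeasF Δx hΔ).aestronglyMeasurable
    · filter_upwards [Ioo_mem_nhdsGT (zero_lt_one (α := ℝ))] with Δx hΔ
      filter_upwards with x
      obtain ⟨hΔ0, hΔ1⟩ := hΔ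
      have hS := hself Δx hΔ0 x
      have hc : |(((J Δx x : ℝ)) + r) * Δx - xc| ≤ |x - xc| + 1 := by
        have h1 : |(((J Δx x : ℝ)) + r) * Δx - x| ≤ Δx/2 := by
          rw [abs_le]; constructor <;> [linarith [hS.2]; linarith [hS.1]]
        calc |(((J Δx x : ℝ)) + r) * Δx - xc|
            = |((((J Δx x : ℝ)) + r) * Δx - x) + (x - xc)| := by ring_nf
          _ ≤ |(((J Δx x : ℝ)) + r) * Δx - x| + |x - xc| := abs_add_le _ _
          _ ≤ |x - xc| + 1 := by linarith
      have hq : |(g Δx (J Δx x) / Δx) ^ m| ≤ C ^ m := by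
        rw [abs_pow]
        apply pow_le_pow_left₀ (abs_nonneg _)
        rw [abs_of_nonneg (div_nonneg (hg_nonneg Δx hΔ0 _) hΔ0.le)]
        rw [div_le_iff₀ hΔ0]
        exact hg_le Δx hΔ0 _
      rw [Real.norm_eq_abs]
      calc |F Δx x| = |(((J Δx x : ℝ)) + r) * Δx - xc| * |(g Δx (J Δx x) / Δx) ^ m| *
            |phi σ xc x| := by rw [hFdef]; simp [abs_mul]
        _ ≤ (|x - xc| + 1) * C ^ m * |phi σ xc x| := by
            apply mul_le_mul_of_nonneg_right _ (abs_nonneg _)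
            exact mul_le_mul hc hq (abs_nonneg _) (by positivity)
        _ = C ^ m * ((|x - xc| + 1) * phi σ xc x) := by
            rw [abs_of_nonneg (phi_nonneg hσ xc x)]; ring
    · exact hbound_int
    · filter_upwards with x
      -- pointwise limit
      have hcx : Tendsto (fun Δx => (((J Δx x : ℝ)) + r) * Δx) (𝓝[>] (0:ℝ)) (𝓝 x) := by
        have hlo : Tendsto (fun Δx : ℝ => x - Δx/2) (𝓝[>] (0:ℝ)) (𝓝 x) := by
          have : Tendsto (fun Δx : ℝ => x - Δx/2) (𝓝 (0:ℝ)) (𝓝 (x - 0/2)) :=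
            (continuous_const.sub (continuous_id.div_const 2)).tendsto 0
          simpa using this.mono_left nhdsWithin_le_nhds
        have hhi : Tendsto (fun Δx : ℝ => x + Δx/2) (𝓝[>] (0:ℝ)) (𝓝 x) := by
          have : Tendsto (fun Δx : ℝ => x + Δx/2) (𝓝 (0:ℝ)) (𝓝 (x + 0/2)) :=
            (continuous_const.add (continuous_id.div_const 2)).tendsto 0
          simpa using this.mono_left nhdsWithin_le_nhds
        apply tendsto_of_tendsto_of_tendsto_of_le_of_le' hlo hhi
        · filter_upwards [self_mem_nhdsWithin] with Δx hΔ
          have := (hself Δx hΔ x).2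
          linarith
        · filter_upwards [self_mem_nhdsWithin] with Δx hΔ
          have := (hself Δx hΔ x).1
          linarith
      have hqx : Tendsto (fun Δx => g Δx (J Δx x) / Δx) (𝓝[>] (0:ℝ))
          (𝓝 (phi σ xc x)) := by
        have hdiff : Tendsto (fun Δx => g Δx (J Δx x) / Δx - phi σ xc x)
            (𝓝[>] (0:ℝ)) (𝓝 0) := by
          apply squeeze_zero_norm' (a := fun Δx => (C / σ) * Δx)
          · filter_upwards [self_mem_nhdsWithin] with Δx hΔ
            have hΔ : (0:ℝ) < Δx := hΔ
            have hS := hself Δx hΔ x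
            have hnear := int_near hσ xc (a := (((J Δx x : ℝ))+r)*Δx - Δx/2)
              (b := (((J Δx x : ℝ))+r)*Δx + Δx/2) (x := x) hS.1 hS.2.le
            rw [show ((((J Δx x : ℝ))+r)*Δx + Δx/2) - ((((J Δx x : ℝ))+r)*Δx - Δx/2) = Δx
              from by ring] at hnear
            rw [← hg'] at hnear
            rw [Real.norm_eq_abs]
            have heq : g Δx (J Δx x) / Δx - phi σ xc x
                = (g Δx (J Δx x) - Δx * phi σ xc x) / Δx := by
              field_simp
            rw [heq, abs_div, abs_of_pos hΔ, div_le_iff₀ hΔ]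
            calc |g Δx (J Δx x) - Δx * phi σ xc x| ≤ (C / σ) * Δx ^ 2 := hnear
              _ = C / σ * Δx * Δx := by ring
          · have : Tendsto (fun Δx : ℝ => (C / σ) * Δx) (𝓝 (0:ℝ)) (𝓝 ((C/σ) * 0)) :=
              (continuous_const.mul continuous_id).tendsto 0
            simpa using this.mono_left nhdsWithin_le_nhds
        have := hdiff.add (tendsto_const_nhds (x := phi σ xc x))
        simpa using this
      have : Tendsto (fun Δx => F Δx x) (𝓝[>] (0:ℝ))
          (𝓝 ((x - xc) * phi σ xc x ^ m * phi σ xc x)) := by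
        exact ((hcx.sub_const xc).mul (hqx.pow m)).mul tendsto_const_nhds
      rw [show (x - xc) * phi σ xc x ^ m * phi σ xc x = (x - xc) * phi σ xc x ^ k from
        by rw [← hmk, pow_succ]; ring] at this
      exact this
  rw [Stmt10.odd_integral hσ xc k] at hDCT
  apply hDCT.congr'
  filter_upwards [self_mem_nhdsWithin] with Δx hΔ
  exact (key Δx hΔ).symm
end

section
/- Let σ > 0, x_c ∈ ℝ, and r ∈ [0,1). For Δx > 0 define pixel centers x_i = (i + r)·Δx for i ∈ ℤ and g_i(x_c) = ∫_{x_i−Δx/2}^{x_i+Δx/2} Φ(x − x_c) dx, where Φ(x) = (1/(√(2π)σ)) e^{−x²/(2σ²)}. Then lim_{Δx→0⁺} (1/Δx)·Σ_{i∈ℤ} g_i(x_c)² = 1/(2√π·σ). -/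
open Real Filter Topology
open MeasureTheory

/-- **High-resolution limit of `Σ g_i²`.**  For pixels of size `Δx` centered at
`x_i = (i+r)Δx` with Gaussian flux fractions `g_i(x_c)`,
`(1/Δx) Σ_{i∈ℤ} g_i(x_c)² → 1/(2√π σ)` as `Δx → 0⁺`. -/
theorem stmt_11
    (σ xc r : ℝ) (hσ : 0 < σ) (hr : r ∈ Set.Ico (0 : ℝ) 1)
    (g : ℝ → ℤ → ℝ)
    (hg : ∀ Δx : ℝ, ∀ i : ℤ, g Δx i =
      ∫ x in (((i : ℝ) + r) * Δx - Δx / 2)..(((i : ℝ) + r) * Δx + Δx / 2),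
        (1 / (Real.sqrt (2 * π) * σ)) * Real.exp (-(x - xc) ^ 2 / (2 * σ ^ 2))) :
    Tendsto (fun Δx : ℝ => (1 / Δx) * ∑' i : ℤ, g Δx i ^ 2)
      (𝓝[>] 0) (𝓝 (1 / (2 * Real.sqrt π * σ))) := by
  set c : ℝ := 1 / (Real.sqrt (2 * π) * σ) with hc
  set φ : ℝ → ℝ := fun x => c * Real.exp (-(x - xc) ^ 2 / (2 * σ ^ 2)) with hφ
  have hc_pos : 0 < c := by
    rw [hc]; positivity
  have hφ_cont : Continuous φ := by
    apply continuous_const.mul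
    exact (Real.continuous_exp.comp (by fun_prop))
  have hφ_nonneg : ∀ x, 0 ≤ φ x := fun x => by positivity
  have hφ_le : ∀ x, φ x ≤ c := by
    intro x
    have : Real.exp (-(x - xc) ^ 2 / (2 * σ ^ 2)) ≤ 1 := by
      rw [Real.exp_le_one_iff, neg_div]
      exact neg_nonpos.mpr (by positivity)
    calc φ x = c * Real.exp (-(x - xc) ^ 2 / (2 * σ ^ 2)) := rfl
    _ ≤ c * 1 := by nlinarith
    _ = c := mul_one c
  have hφ_int : Integrable φ := by
    have h1 : Integrable (fun x : ℝ => Real.exp (-(1 / (2 * σ ^ 2)) * x ^ 2)) :=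
      integrable_exp_neg_mul_sq (by positivity)
    have h2 := (h1.comp_sub_right xc).const_mul c
    refine h2.congr (Filter.Eventually.of_forall fun x => ?_)
    show c * Real.exp (-(1 / (2 * σ ^ 2)) * (x - xc) ^ 2) = _
    congr 1
    ring
  -- pixel sets and index function
  set ι : ℝ → ℝ → ℤ := fun Δx x => ⌊x / Δx - r + 1 / 2⌋ with hι
  set S : ℝ → ℤ → Set ℝ := fun Δx i =>
    Set.Ico ((((i : ℝ) + r) * Δx - Δx / 2)) ((((i : ℝ) + r) * Δx + Δx / 2)) with hS
  have hmem : ∀ Δx : ℝ, 0 < Δx → ∀ x : ℝ, ∀ i : ℤ, x ∈ S Δx i ↔ ι Δx x = i := by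
    intro Δx hΔ x i
    simp only [hS, Set.mem_Ico, hι]
    rw [Int.floor_eq_iff]
    constructor
    · rintro ⟨h1, h2⟩
      have h1' : (i : ℝ) + r - 1 / 2 ≤ x / Δx := (le_div_iff₀ hΔ).mpr (by nlinarith)
      have h2' : x / Δx < (i : ℝ) + r + 1 / 2 := (div_lt_iff₀ hΔ).mpr (by nlinarith)
      constructor
      · linarith
      · push_cast; linarith
    · rintro ⟨h1, h2⟩
      have h2' : x / Δx < (i : ℝ) + r + 1 / 2 := by push_cast at h2; linarith
      have h1' : (i : ℝ) + r - 1 / 2 ≤ x / Δx := by linarith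
      have ha := (le_div_iff₀ hΔ).mp h1'
      have hb := (div_lt_iff₀ hΔ).mp h2'
      constructor
      · nlinarith
      · nlinarith
  have hSmeas : ∀ Δx i, MeasurableSet (S Δx i) := fun Δx i => measurableSet_Ico
  have hUnion : ∀ Δx : ℝ, 0 < Δx → (⋃ i : ℤ, S Δx i) = Set.univ := by
    intro Δx hΔ
    ext x
    simp only [Set.mem_iUnion, Set.mem_univ, iff_true]
    exact ⟨ι Δx x, (hmem Δx hΔ x _).mpr rfl⟩
  have hDisj : ∀ Δx : ℝ, 0 < Δx → Pairwise (Function.onFun Disjoint (S Δx)) := by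
    intro Δx hΔ i j hij
    refine Set.disjoint_left.mpr fun x hxi hxj => hij ?_
    rw [← (hmem Δx hΔ x i).mp hxi, ← (hmem Δx hΔ x j).mp hxj]
  have hab : ∀ Δx : ℝ, 0 < Δx → ∀ i : ℤ,
      ((i : ℝ) + r) * Δx - Δx / 2 ≤ ((i : ℝ) + r) * Δx + Δx / 2 := by
    intro Δx hΔ i; linarith
  have hgS : ∀ Δx : ℝ, 0 < Δx → ∀ i : ℤ, g Δx i = ∫ x in S Δx i, φ x := by
    intro Δx hΔ i
    rw [hg Δx i, intervalIntegral.integral_of_le (hab Δx hΔ i)]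
    rw [hS]
    rw [MeasureTheory.integral_Ioc_eq_integral_Ioo, MeasureTheory.integral_Ico_eq_integral_Ioo]
  have hg_nonneg : ∀ Δx : ℝ, 0 < Δx → ∀ i : ℤ, 0 ≤ g Δx i := by
    intro Δx hΔ i
    rw [hgS Δx hΔ i]
    exact setIntegral_nonneg (hSmeas Δx i) fun x _ => hφ_nonneg x
  have hg_le : ∀ Δx : ℝ, 0 < Δx → ∀ i : ℤ, g Δx i ≤ c * Δx := by
    intro Δx hΔ i
    have h1 : ‖∫ x in (((i : ℝ) + r) * Δx - Δx / 2)..(((i : ℝ) + r) * Δx + Δx / 2), φ x‖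
        ≤ c * |((((i : ℝ) + r) * Δx + Δx / 2)) - ((((i : ℝ) + r) * Δx - Δx / 2))| :=
      intervalIntegral.norm_integral_le_of_norm_le_const fun x _ => by
        rw [Real.norm_eq_abs, abs_of_nonneg (hφ_nonneg x)]; exact hφ_le x
    have h2 : (((i : ℝ) + r) * Δx + Δx / 2) - ((((i : ℝ) + r) * Δx - Δx / 2)) = Δx := by ring
    rw [h2, abs_of_pos hΔ, Real.norm_eq_abs] at h1
    calc g Δx i ≤ |g Δx i| := le_abs_self _
    _ = |∫ x in (((i : ℝ) + r) * Δx - Δx / 2)..(((i : ℝ) + r) * Δx + Δx / 2), φ x| := by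
        rw [hg Δx i]
    _ ≤ c * Δx := h1
  -- the auxiliary integrand
  set F : ℝ → ℝ → ℝ := fun Δx x => φ x * (g Δx (ι Δx x) / Δx) with hF
  have hι_meas : ∀ Δx : ℝ, Measurable (ι Δx) := by
    intro Δx
    exact Int.measurable_floor.comp (((measurable_id.div_const Δx).sub_const r).add_const (1 / 2))
  have hF_meas : ∀ Δx : ℝ, AEStronglyMeasurable (F Δx) volume := by
    intro Δx
    exact (hφ_cont.measurable.mul
      ((measurable_of_countable fun i => g Δx i / Δx).comp (hι_meas Δx))).aestronglyMeasurable
  have hF_bound : ∀ Δx : ℝ, 0 < Δx → ∀ x : ℝ, ‖F Δx x‖ ≤ c * φ x := by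
    intro Δx hΔ x
    have h1 : 0 ≤ g Δx (ι Δx x) / Δx := div_nonneg (hg_nonneg Δx hΔ _) hΔ.le
    have h2 : g Δx (ι Δx x) / Δx ≤ c := (div_le_iff₀ hΔ).mpr (hg_le Δx hΔ _)
    rw [hF, Real.norm_eq_abs, abs_of_nonneg (mul_nonneg (hφ_nonneg x) h1)]
    calc φ x * (g Δx (ι Δx x) / Δx) ≤ φ x * c := by nlinarith [hφ_nonneg x]
    _ = c * φ x := mul_comm _ _
  have hF_int : ∀ Δx : ℝ, 0 < Δx → Integrable (F Δx) := by
    intro Δx hΔ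
    refine (hφ_int.const_mul c).mono (hF_meas Δx) (Filter.Eventually.of_forall fun x => ?_)
    refine (hF_bound Δx hΔ x).trans ?_
    rw [Real.norm_eq_abs, abs_of_nonneg (by positivity)]
  -- key identity
  have hkey : ∀ Δx : ℝ, 0 < Δx → (1 / Δx) * ∑' i : ℤ, g Δx i ^ 2 = ∫ x, F Δx x := by
    intro Δx hΔ
    have h1 : ∫ x, F Δx x = ∑' i : ℤ, ∫ x in S Δx i, F Δx x := by
      rw [← MeasureTheory.setIntegral_univ, ← hUnion Δx hΔ]
      exact integral_iUnion (hSmeas Δx) (hDisj Δx hΔ)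
        ((hF_int Δx hΔ).integrableOn)
    have h2 : ∀ i : ℤ, ∫ x in S Δx i, F Δx x = (1 / Δx) * g Δx i ^ 2 := by
      intro i
      have he : Set.EqOn (F Δx) (fun x => φ x * (g Δx i / Δx)) (S Δx i) := by
        intro x hx
        simp only [hF]
        rw [(hmem Δx hΔ x i).mp hx]
      rw [setIntegral_congr_fun (hSmeas Δx i) he, integral_mul_const, ← hgS Δx hΔ i]
      ring
    rw [h1, tsum_congr h2, tsum_mul_left]
  -- pointwise limit
  have hinner : ∀ x : ℝ, Tendsto (fun Δx : ℝ => g Δx (ι Δx x) / Δx) (𝓝[>] (0:ℝ)) (𝓝 (φ x)) := by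
    intro x
    rw [Metric.tendsto_nhdsWithin_nhds]
    intro ε hε
    obtain ⟨δ, hδ, hcont⟩ := Metric.continuous_iff.mp hφ_cont x (ε / 2) (by linarith)
    refine ⟨δ, hδ, ?_⟩
    intro Δx hΔx hdist
    have hΔ : 0 < Δx := hΔx
    have hΔδ : Δx < δ := by
      rw [Real.dist_eq, sub_zero, abs_of_pos hΔ] at hdist; exact hdist
    set i : ℤ := ι Δx x with hi
    set a : ℝ := ((i : ℝ) + r) * Δx - Δx / 2 with ha
    set b : ℝ := ((i : ℝ) + r) * Δx + Δx / 2 with hb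
    have hx : x ∈ S Δx i := (hmem Δx hΔ x i).mpr rfl
    have hax : a ≤ x := hx.1
    have hxb : x < b := hx.2
    have hba : b - a = Δx := by rw [ha, hb]; ring
    have hab' : a ≤ b := by linarith
    have hsub : ∫ t in a..b, (φ t - φ x) = g Δx i - Δx * φ x := by
      rw [intervalIntegral.integral_sub (hφ_cont.intervalIntegrable a b)
        (intervalIntegrable_const), intervalIntegral.integral_const, hg Δx i]
      rw [smul_eq_mul, hba]
    have hbound2 : ∀ t ∈ Set.uIoc a b, ‖φ t - φ x‖ ≤ ε / 2 := by
      intro t ht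
      rw [Set.uIoc_of_le hab'] at ht
      have h1 : |t - x| < δ := by
        rw [abs_lt]
        constructor
        · have : a ≤ t := ht.1.le
          nlinarith
        · have : t ≤ b := ht.2
          nlinarith
      have := hcont t (by rw [Real.dist_eq]; exact h1)
      rw [Real.dist_eq] at this
      exact this.le
    have hnorm : |g Δx i - Δx * φ x| ≤ ε / 2 * Δx := by
      have := intervalIntegral.norm_integral_le_of_norm_le_const hbound2
      rw [hsub, Real.norm_eq_abs] at this
      calc |g Δx i - Δx * φ x| ≤ ε / 2 * |b - a| := this
      _ = ε / 2 * Δx := by rw [hba, abs_of_pos hΔ]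
    rw [Real.dist_eq]
    have heq : g Δx i / Δx - φ x = (g Δx i - Δx * φ x) / Δx := by
      field_simp
    rw [heq, abs_div, abs_of_pos hΔ]
    calc |g Δx i - Δx * φ x| / Δx ≤ ε / 2 * Δx / Δx := by gcongr
    _ = ε / 2 := by field_simp
    _ < ε := by linarith
  have hlim : ∀ x : ℝ, Tendsto (fun Δx : ℝ => F Δx x) (𝓝[>] (0:ℝ)) (𝓝 (φ x ^ 2)) := by
    intro x
    have h1 := (hinner x).const_mul (φ x)
    rw [← sq] at h1
    exact h1
  have hval : ∫ x : ℝ, φ x ^ 2 = 1 / (2 * Real.sqrt π * σ) := by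
    have h1 : ∀ x : ℝ, φ x ^ 2 = c ^ 2 * Real.exp (-(1 / σ ^ 2) * (x - xc) ^ 2) := by
      intro x
      show (c * Real.exp (-(x - xc) ^ 2 / (2 * σ ^ 2))) ^ 2 = _
      rw [mul_pow, sq (Real.exp _), ← Real.exp_add]
      congr 1
      field_simp
      ring
    simp only [h1]
    rw [MeasureTheory.integral_const_mul]
    rw [MeasureTheory.integral_sub_right_eq_self (fun a => Real.exp (-(1 / σ ^ 2) * a ^ 2)) xc]
    rw [integral_gaussian]
    have h2 : π / (1 / σ ^ 2) = π * σ ^ 2 := by field_simp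
    rw [h2, Real.sqrt_mul pi_nonneg, Real.sqrt_sq hσ.le, hc]
    have hs2 : Real.sqrt (2 * π) ^ 2 = 2 * π := Real.sq_sqrt (by positivity)
    have hsπ : Real.sqrt π * Real.sqrt π = π := Real.mul_self_sqrt pi_nonneg
    have hπ : (0:ℝ) < Real.sqrt π := Real.sqrt_pos.mpr pi_pos
    have h2π : (0:ℝ) < Real.sqrt (2 * π) := Real.sqrt_pos.mpr (by positivity)
    field_simp
    nlinarith [hs2, hsπ, Real.mul_self_sqrt (by norm_num : (0:ℝ) ≤ 2)]
  have hmain : Tendsto (fun Δx : ℝ => ∫ x : ℝ, F Δx x) (𝓝[>] (0:ℝ))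
      (𝓝 (∫ x : ℝ, φ x ^ 2)) := by
    refine tendsto_integral_filter_of_dominated_convergence (fun x => c * φ x)
      (Filter.Eventually.of_forall hF_meas) ?_ (hφ_int.const_mul c)
      (Filter.Eventually.of_forall fun x => hlim x)
    exact eventually_mem_nhdsWithin.mono fun Δx hΔ =>
      Filter.Eventually.of_forall fun x => hF_bound Δx hΔ x
  rw [← hval]
  refine Tendsto.congr' ?_ hmain
  exact eventually_mem_nhdsWithin.mono fun Δx hΔ => (hkey Δx hΔ).symm
end

section
/- Let σ > 0, x_c ∈ ℝ, and r ∈ [0,1). For Δx > 0 define pixel centers x_i = (i + r)·Δx for i ∈ ℤ and g_i(x_c) = ∫_{x_i−Δx/2}^{x_i+Δx/2} Φ(x − x_c) dx, where Φ(x) = (1/(√(2π)σ)) e^{−x²/(2σ²)}. Then lim_{Δx→0⁺} (1/Δx²)·Σ_{i∈ℤ} g_i(x_c)³ = 1/(2√3·π·σ²). -/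
open Real Filter Topology MeasureTheory

noncomputable def pix (r Δx x : ℝ) : ℤ := ⌊x / Δx + (1/2 - r)⌋

lemma pix_mem {r Δx : ℝ} (hΔ : 0 < Δx) (x : ℝ) :
    ((pix r Δx x : ℝ) + r) * Δx - Δx / 2 ≤ x ∧
      x < ((pix r Δx x : ℝ) + r) * Δx + Δx / 2 := by
  have h1 : ((pix r Δx x : ℝ)) ≤ x / Δx + (1/2 - r) := Int.floor_le _
  have h2 : x / Δx + (1/2 - r) < (pix r Δx x : ℝ) + 1 := Int.lt_floor_add_one _
  have hx : x / Δx * Δx = x := div_mul_cancel₀ x hΔ.ne'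
  constructor
  · nlinarith [mul_le_mul_of_nonneg_right h1 hΔ.le]
  · nlinarith [mul_lt_mul_of_pos_right h2 hΔ]

lemma pix_eq {r Δx x : ℝ} (hΔ : 0 < Δx) {i : ℤ}
    (h1 : ((i:ℝ) + r) * Δx - Δx/2 ≤ x) (h2 : x < ((i:ℝ)+r)*Δx + Δx/2) :
    pix r Δx x = i := by
  have l1 : (i:ℝ) ≤ x / Δx + (1/2 - r) := by
    have h : ((i:ℝ) + r - 1/2) * Δx ≤ x := by linarith
    have := (le_div_iff₀ hΔ).mpr h
    linarith
  have l2 : x / Δx + (1/2 - r) < (i:ℝ) + 1 := by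
    have h : x < ((i:ℝ) + r + 1/2) * Δx := by linarith
    have := (div_lt_iff₀ hΔ).mpr h
    linarith
  exact Int.floor_eq_iff.mpr ⟨l1, by exact_mod_cast l2⟩

/-- **High-resolution limit of `Σ g_i³`.**  For pixels of size `Δx` centered at
`x_i = (i+r)Δx` with Gaussian flux fractions `g_i(x_c)`,
`(1/Δx²) Σ_{i∈ℤ} g_i(x_c)³ → 1/(2√3 π σ²)` as `Δx → 0⁺`. -/
theorem stmt_13
    (σ xc r : ℝ) (hσ : 0 < σ) (hr : r ∈ Set.Ico (0 : ℝ) 1)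
    (g : ℝ → ℤ → ℝ)
    (hg : ∀ Δx : ℝ, ∀ i : ℤ, g Δx i =
      ∫ x in (((i : ℝ) + r) * Δx - Δx / 2)..(((i : ℝ) + r) * Δx + Δx / 2),
        (1 / (Real.sqrt (2 * π) * σ)) * Real.exp (-(x - xc) ^ 2 / (2 * σ ^ 2))) :
    Tendsto (fun Δx : ℝ => (1 / Δx ^ 2) * ∑' i : ℤ, g Δx i ^ 3)
      (𝓝[>] 0) (𝓝 (1 / (2 * Real.sqrt 3 * π * σ ^ 2))) := by
  have hπ : (0:ℝ) < π := Real.pi_pos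
  set c : ℝ := 1 / (Real.sqrt (2 * π) * σ) with hc
  have hc0 : 0 < c := by positivity
  set f : ℝ → ℝ := fun x => c * Real.exp (-(x - xc) ^ 2 / (2 * σ ^ 2)) with hf
  have hfc : Continuous f := by fun_prop
  have hfpos : ∀ x, 0 < f x := fun x => by positivity
  set H : ℝ → ℝ → ℝ := fun Δx x => (g Δx (pix r Δx x) / Δx) ^ 3 with hH
  -- the dominating function
  set bound : ℝ → ℝ :=
    fun x => c ^ 3 * Real.exp (3 * (1/(2*σ^2) - (x - xc)^2/(4*σ^2))) with hbound
  -- basic facts about g for Δx > 0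
  have hg_nonneg : ∀ Δx : ℝ, 0 < Δx → ∀ i : ℤ, 0 ≤ g Δx i := by
    intro Δx hΔ i
    rw [hg]
    apply intervalIntegral.integral_nonneg (by linarith)
    intro u _; positivity
  -- domination
  have hdom : ∀ Δx ∈ Set.Ioc (0:ℝ) 1, ∀ x : ℝ, ‖H Δx x‖ ≤ bound x := by
    intro Δx hΔ x
    obtain ⟨hΔ0, hΔ1⟩ := hΔ
    obtain ⟨hax, hxb⟩ := pix_mem (r := r) hΔ0 x
    set i := pix r Δx x with hi
    set M : ℝ := c * Real.exp (1/(2*σ^2) - (x - xc)^2/(4*σ^2)) with hM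
    have hM0 : 0 ≤ M := by positivity
    have hgM : g Δx i ≤ M * Δx := by
      have hb : ‖g Δx i‖ ≤ M * |(((i:ℝ)+r)*Δx + Δx/2) - ((((i:ℝ)+r)*Δx - Δx/2))| := by
        rw [hg]
        apply intervalIntegral.norm_integral_le_of_norm_le_const
        intro t ht
        rw [Set.uIoc_of_le (by linarith)] at ht
        have h1 : ((i:ℝ)+r)*Δx - Δx/2 < t := ht.1
        have h2 : t ≤ ((i:ℝ)+r)*Δx + Δx/2 := ht.2
        have htx : (t - x)^2 ≤ 1 := by nlinarith
        have key : (x - xc)^2 ≤ 2 + 2*(t - xc)^2 := by nlinarith [sq_nonneg (x - t - (t - xc)), sq_nonneg (x - t + (t - xc))]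
        have hexp : Real.exp (-(t - xc) ^ 2 / (2 * σ ^ 2)) ≤
            Real.exp (1/(2*σ^2) - (x - xc)^2/(4*σ^2)) := by
          apply Real.exp_le_exp.mpr
          have h4 : (0:ℝ) < 4*σ^2 := by positivity
          have e1 : -(t - xc)^2/(2*σ^2) = (-2*(t-xc)^2)/(4*σ^2) := by ring
          have e2 : 1/(2*σ^2) - (x - xc)^2/(4*σ^2) = (2 - (x-xc)^2)/(4*σ^2) := by ring
          rw [e1, e2, div_le_div_iff₀ h4 h4]
          exact mul_le_mul_of_nonneg_right (by linarith) h4.le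
        rw [Real.norm_eq_abs, abs_of_nonneg (hfpos t).le]
        simp only [hf, hM]
        exact mul_le_mul_of_nonneg_left hexp hc0.le
      have habs : |(((i:ℝ)+r)*Δx + Δx/2) - ((((i:ℝ)+r)*Δx - Δx/2))| = Δx := by
        rw [abs_of_nonneg (by linarith)]; ring
      rw [habs, Real.norm_eq_abs, abs_of_nonneg (hg_nonneg Δx hΔ0 i)] at hb
      exact hb
    have hdiv : g Δx i / Δx ≤ M := by rw [div_le_iff₀ hΔ0]; exact hgM
    have hdiv0 : 0 ≤ g Δx i / Δx := div_nonneg (hg_nonneg Δx hΔ0 i) hΔ0.le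
    have h3 : H Δx x ≤ M ^ 3 := by
      simp only [hH, ← hi]
      exact pow_le_pow_left₀ hdiv0 hdiv 3
    have hM3 : M ^ 3 = bound x := by
      simp only [hM, hbound, mul_pow, ← Real.exp_nat_mul]
      norm_num
    have hH0 : 0 ≤ H Δx x := by simp only [hH, ← hi]; exact pow_nonneg hdiv0 3
    rw [Real.norm_eq_abs, abs_of_nonneg hH0]
    linarith
  -- measurability
  have hmeas : ∀ Δx : ℝ, 0 < Δx → AEStronglyMeasurable (H Δx) volume := by
    intro Δx hΔ
    have h1 : Measurable fun x : ℝ => pix r Δx x := by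
      have : Measurable fun x : ℝ => x / Δx + (1/2 - r) :=
        (measurable_id.div_const Δx).add_const _
      exact this.floor
    exact (((measurable_from_top.comp h1).div_const Δx).pow_const 3).aestronglyMeasurable
  -- bound integrable
  have hbound_int : Integrable bound := by
    have h1 : Integrable (fun x : ℝ => Real.exp (-(3/(4*σ^2)) * x ^ 2)) :=
      integrable_exp_neg_mul_sq (by positivity)
    have h2 : Integrable (fun x : ℝ => Real.exp (-(3/(4*σ^2)) * (x - xc) ^ 2)) :=
      h1.comp_sub_right xc
    apply (h2.const_mul (c ^ 3 * Real.exp (3/(2*σ^2)))).congr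
    filter_upwards with x
    simp only [hbound]
    have e : 3/(2*σ^2) + -(3/(4*σ^2)) * (x - xc)^2 = 3 * (1/(2*σ^2) - (x - xc)^2/(4*σ^2)) := by
      ring
    rw [mul_assoc, ← Real.exp_add, e]
  -- pointwise limit
  have hbase : ∀ x : ℝ, Tendsto (fun Δx => g Δx (pix r Δx x) / Δx) (𝓝[>] 0) (𝓝 (f x)) := by
    intro x
    rw [Metric.tendsto_nhdsWithin_nhds]
    intro ε hε
    obtain ⟨δ, hδ0, hδ⟩ := Metric.continuousAt_iff.mp (hfc.continuousAt (x := x)) (ε/2)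
      (by linarith)
    refine ⟨δ, hδ0, ?_⟩
    intro Δx hΔ hdist
    have hΔ0 : 0 < Δx := hΔ
    rw [Real.dist_eq, sub_zero, abs_of_pos hΔ0] at hdist
    obtain ⟨hax, hxb⟩ := pix_mem (r := r) hΔ0 x
    set i := pix r Δx x with hi
    have hab : ((i:ℝ)+r)*Δx - Δx/2 ≤ ((i:ℝ)+r)*Δx + Δx/2 := by linarith
    have hfi : IntervalIntegrable f volume (((i:ℝ)+r)*Δx - Δx/2) (((i:ℝ)+r)*Δx + Δx/2) :=
      hfc.intervalIntegrable _ _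
    have hba : (((i:ℝ)+r)*Δx + Δx/2) - (((i:ℝ)+r)*Δx - Δx/2) = Δx := by ring
    have hkey : ‖∫ t in (((i:ℝ)+r)*Δx - Δx/2)..(((i:ℝ)+r)*Δx + Δx/2), (f t - f x)‖
        ≤ ε/2 * |(((i:ℝ)+r)*Δx + Δx/2) - (((i:ℝ)+r)*Δx - Δx/2)| := by
      apply intervalIntegral.norm_integral_le_of_norm_le_const
      intro t ht
      rw [Set.uIoc_of_le hab] at ht
      have hd : dist t x < δ := by
        rw [Real.dist_eq, abs_lt]
        constructor
        · linarith [ht.1]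
        · linarith [ht.2]
      have := hδ hd
      rw [Real.dist_eq] at this
      rw [Real.norm_eq_abs]
      linarith
    have heq : g Δx i - Δx * f x
        = ∫ t in (((i:ℝ)+r)*Δx - Δx/2)..(((i:ℝ)+r)*Δx + Δx/2), (f t - f x) := by
      rw [intervalIntegral.integral_sub hfi intervalIntegrable_const,
          intervalIntegral.integral_const, smul_eq_mul, hba, hg]
    rw [hba] at hkey
    rw [Real.dist_eq]
    have hquot : g Δx i / Δx - f x = (g Δx i - Δx * f x) / Δx := by
      field_simp
    rw [hquot, abs_div, abs_of_pos hΔ0, div_lt_iff₀ hΔ0]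
    have h2 : |g Δx i - Δx * f x| ≤ ε/2 * Δx := by
      rw [heq, ← Real.norm_eq_abs]
      calc ‖∫ t in (((i:ℝ)+r)*Δx - Δx/2)..(((i:ℝ)+r)*Δx + Δx/2), (f t - f x)‖
          ≤ ε/2 * |Δx| := hkey
        _ = ε/2 * Δx := by rw [abs_of_pos hΔ0]
    nlinarith
  have hlim : ∀ x : ℝ, Tendsto (fun Δx => H Δx x) (𝓝[>] 0) (𝓝 (f x ^ 3)) := by
    intro x
    simpa only [hH] using (hbase x).pow 3
  -- integral identity
  have hΔne : ∀ Δx : ℝ, 0 < Δx → (Δx : ℝ) ≠ 0 := fun Δx h => h.ne'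
  have hint : ∀ Δx ∈ Set.Ioc (0:ℝ) 1,
      (∫ x, H Δx x) = (1 / Δx ^ 2) * ∑' i : ℤ, g Δx i ^ 3 := by
    intro Δx hΔx
    obtain ⟨hΔ0, hΔ1⟩ := hΔx
    set S : ℤ → Set ℝ :=
      fun i => Set.Ico (((i:ℝ)+r)*Δx - Δx/2) (((i:ℝ)+r)*Δx + Δx/2) with hS
    have hSm : ∀ i, MeasurableSet (S i) := fun i => measurableSet_Ico
    have hSd : Pairwise (Function.onFun Disjoint S) := by
      intro i j hij
      simp only [Function.onFun, Set.disjoint_left]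
      intro x hxi hxj
      exact hij ((pix_eq hΔ0 hxi.1 hxi.2).symm.trans (pix_eq hΔ0 hxj.1 hxj.2))
    have hSu : (⋃ i, S i) = Set.univ := by
      ext x
      simp only [Set.mem_iUnion, Set.mem_univ, iff_true]
      exact ⟨pix r Δx x, (pix_mem hΔ0 x).1, (pix_mem hΔ0 x).2⟩
    have hHint : Integrable (H Δx) := by
      apply Integrable.mono' hbound_int (hmeas Δx hΔ0)
      exact ae_of_all _ (hdom Δx ⟨hΔ0, hΔ1⟩)
    have h1 : (∫ x, H Δx x) = ∑' i : ℤ, ∫ x in S i, H Δx x := by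
      rw [← setIntegral_univ, ← hSu, integral_iUnion hSm hSd (hSu ▸ hHint.integrableOn)]
    have h2 : ∀ i : ℤ, (∫ x in S i, H Δx x) = (1 / Δx ^ 2) * g Δx i ^ 3 := by
      intro i
      have hconst : ∀ x ∈ S i, H Δx x = (g Δx i / Δx)^3 := by
        intro x hx
        simp only [hH]
        rw [pix_eq hΔ0 hx.1 hx.2]
      rw [setIntegral_congr_fun (hSm i) hconst, setIntegral_const]
      simp only [hS, measureReal_def, Real.volume_Ico]
      rw [show (((i:ℝ)+r)*Δx + Δx/2 - ((((i:ℝ)+r)*Δx - Δx/2))) = Δx by ring,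
        ENNReal.toReal_ofReal hΔ0.le, smul_eq_mul]
      field_simp
    rw [h1, tsum_congr h2, tsum_mul_left]
  -- dominated convergence
  have hmem : Set.Ioc (0:ℝ) 1 ∈ 𝓝[>] (0:ℝ) :=
    Ioc_mem_nhdsGT_of_mem ⟨le_refl 0, zero_lt_one⟩
  have hTend : Tendsto (fun Δx => ∫ x, H Δx x) (𝓝[>] 0) (𝓝 (∫ x, f x ^ 3)) := by
    apply tendsto_integral_filter_of_dominated_convergence bound
    · filter_upwards [hmem] with Δx hΔ using hmeas Δx hΔ.1
    · filter_upwards [hmem] with Δx hΔ using ae_of_all _ (hdom Δx hΔ)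
    · exact hbound_int
    · exact ae_of_all _ hlim
  -- value of the limit
  have hval : (∫ x, f x ^ 3) = 1 / (2 * Real.sqrt 3 * π * σ ^ 2) := by
    have h1 : ∀ x : ℝ, f x ^ 3 = c^3 * Real.exp (-(3/(2*σ^2)) * (x - xc)^2) := by
      intro x
      have e : ((3:ℕ):ℝ) * (-(x - xc) ^ 2 / (2 * σ ^ 2)) = -(3/(2*σ^2)) * (x - xc)^2 := by
        push_cast; ring
      simp only [hf]
      rw [mul_pow, ← Real.exp_nat_mul, e]
    have hs2 : Real.sqrt (2*π) ^ 2 = 2*π := Real.sq_sqrt (by positivity)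
    have hs3 : Real.sqrt 3 ^ 2 = 3 := Real.sq_sqrt (by norm_num)
    have hs2p : 0 < Real.sqrt (2*π) := Real.sqrt_pos.mpr (by positivity)
    have hs3p : 0 < Real.sqrt 3 := Real.sqrt_pos.mpr (by norm_num)
    calc (∫ x, f x ^ 3)
        = ∫ x, c^3 * Real.exp (-(3/(2*σ^2)) * (x - xc)^2) := by
          exact integral_congr_ae (ae_of_all _ h1)
      _ = c^3 * ∫ x, Real.exp (-(3/(2*σ^2)) * (x - xc)^2) := integral_const_mul _ _
      _ = c^3 * ∫ x, Real.exp (-(3/(2*σ^2)) * x^2) := by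
          rw [integral_sub_right_eq_self (fun x => Real.exp (-(3/(2*σ^2)) * x^2)) xc]
      _ = c^3 * Real.sqrt (π / (3/(2*σ^2))) := by rw [integral_gaussian]
      _ = 1 / (2 * Real.sqrt 3 * π * σ ^ 2) := by
          have h2 : Real.sqrt (π / (3/(2*σ^2))) = Real.sqrt (2*π) * σ / Real.sqrt 3 := by
            rw [show π / (3/(2*σ^2)) = (Real.sqrt (2*π) * σ / Real.sqrt 3)^2 by
              rw [div_pow, mul_pow, hs2, hs3]; field_simp]
            exact Real.sqrt_sq (by positivity)
          rw [h2, hc]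
          field_simp
          have e2 : Real.sqrt 2 ^ 2 = 2 := Real.sq_sqrt (by norm_num)
          have eπ : Real.sqrt π ^ 2 = π := Real.sq_sqrt hπ.le
          linear_combination -hs2
  rw [hval] at hTend
  apply hTend.congr'
  filter_upwards [hmem] with Δx hΔ using hint Δx hΔ
end

section
/- Let σ > 0, x_c ∈ ℝ, and r ∈ [0,1). For Δx > 0 define pixel centers x_i = (i + r)·Δx for i ∈ ℤ and g_i(x_c) = ∫_{x_i−Δx/2}^{x_i+Δx/2} Φ(x − x_c) dx, where Φ(x) = (1/(√(2π)σ)) e^{−x²/(2σ²)}. Then lim_{Δx→0⁺} (1/Δx²)·Σ_{i∈ℤ} (x_i − x_c)²·g_i(x_c)³ = 1/(6√3·π). -/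
open Real Filter Topology MeasureTheory Set

noncomputable def s14phi (σ u : ℝ) : ℝ :=
  (1 / (Real.sqrt (2 * π) * σ)) * Real.exp (-u ^ 2 / (2 * σ ^ 2))

noncomputable def s14psi (σ u : ℝ) : ℝ :=
  (1 / (Real.sqrt (2 * π) * σ)) * Real.exp (1 / (2 * σ ^ 2)) * Real.exp (-u ^ 2 / (4 * σ ^ 2))

noncomputable def s14K (σ : ℝ) : ℝ := 1 / (Real.sqrt (2 * π) * σ ^ 2)

noncomputable def s14B (σ : ℝ) (u : ℝ) : ℝ :=
  (|u| + 1) * s14psi σ u ^ 3 + 3 * s14K σ * u ^ 2 * s14psi σ u ^ 2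

noncomputable def s14F (σ u : ℝ) : ℝ := u ^ 2 * s14phi σ u ^ 3

lemma s14phi_nonneg (σ : ℝ) (hσ : 0 < σ) (u : ℝ) : 0 ≤ s14phi σ u := by
  unfold s14phi; positivity

lemma s14psi_nonneg (σ : ℝ) (hσ : 0 < σ) (u : ℝ) : 0 ≤ s14psi σ u := by
  unfold s14psi
  have h2π : 0 < Real.sqrt (2 * π) := Real.sqrt_pos.2 (by positivity)
  positivity

lemma s14K_nonneg (σ : ℝ) : 0 ≤ s14K σ := by unfold s14K; positivity

lemma s14B_nonneg (σ : ℝ) (hσ : 0 < σ) (u : ℝ) : 0 ≤ s14B σ u := by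
  unfold s14B
  have h1 := s14psi_nonneg σ hσ u
  have h2 := s14K_nonneg σ
  have h3 := abs_nonneg u
  positivity

lemma hasDerivAt_s14phi (σ : ℝ) (hσ : 0 < σ) (x : ℝ) :
    HasDerivAt (s14phi σ) ((1 / (Real.sqrt (2 * π) * σ)) *
      (Real.exp (-x ^ 2 / (2 * σ ^ 2)) * (-(2 * x) / (2 * σ ^ 2)))) x := by
  have h1 : HasDerivAt (fun x : ℝ => -x ^ 2 / (2 * σ ^ 2)) (-(2 * x) / (2 * σ ^ 2)) x := by
    simpa using (((hasDerivAt_pow 2 x).neg).div_const (2 * σ ^ 2))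
  exact (h1.exp.const_mul (1 / (Real.sqrt (2 * π) * σ)))

lemma s14phi_lip (σ : ℝ) (hσ : 0 < σ) (u v : ℝ) :
    |s14phi σ v - s14phi σ u| ≤ s14K σ * |v - u| := by
  have h2π : 0 < Real.sqrt (2 * π) := Real.sqrt_pos.2 (by positivity)
  have key := Convex.norm_image_sub_le_of_norm_hasDerivWithin_le
    (f := s14phi σ)
    (f' := fun x => (1 / (Real.sqrt (2 * π) * σ)) *
      (Real.exp (-x ^ 2 / (2 * σ ^ 2)) * (-(2 * x) / (2 * σ ^ 2))))
    (s := Set.univ) (C := s14K σ)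
    (fun x _ => (hasDerivAt_s14phi σ hσ x).hasDerivWithinAt)
    (fun x _ => ?_) convex_univ (Set.mem_univ u) (Set.mem_univ v)
  · simpa [Real.norm_eq_abs] using key
  · -- ‖C * (exp(..) * (-(2x)/(2σ²)))‖ ≤ K
    rw [Real.norm_eq_abs, abs_mul, abs_mul]
    have hC : |1 / (Real.sqrt (2 * π) * σ)| = 1 / (Real.sqrt (2 * π) * σ) := by
      rw [abs_of_nonneg]; positivity
    have he : |Real.exp (-x ^ 2 / (2 * σ ^ 2))| = Real.exp (-x ^ 2 / (2 * σ ^ 2)) :=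
      abs_of_nonneg (Real.exp_pos _).le
    rw [hC, he]
    have hx : |(-(2 * x) / (2 * σ ^ 2))| = |x| / σ ^ 2 := by
      rw [abs_div, abs_of_nonneg (by positivity : (0:ℝ) ≤ 2 * σ ^ 2)]
      rw [abs_neg, abs_mul, abs_two]
      ring
    rw [hx]
    -- reduce to: exp(-x²/(2σ²)) * |x| ≤ σ
    have hkey : Real.exp (-x ^ 2 / (2 * σ ^ 2)) * |x| ≤ σ := by
      have h2 : 1 + x ^ 2 / (2 * σ ^ 2) ≤ Real.exp (x ^ 2 / (2 * σ ^ 2)) :=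
        (Real.add_one_le_exp _).trans_eq' (by ring)
      have h3 : σ * (1 + x ^ 2 / (2 * σ ^ 2)) ≤ σ * Real.exp (x ^ 2 / (2 * σ ^ 2)) :=
        mul_le_mul_of_nonneg_left h2 hσ.le
      have h4 : |x| ≤ σ * (1 + x ^ 2 / (2 * σ ^ 2)) := by
        rw [show σ * (1 + x ^ 2 / (2 * σ ^ 2)) = σ + x ^ 2 / (2 * σ) from by
          field_simp]
        nlinarith [sq_nonneg (|x| - σ), sq_abs x, hσ,
          (show 2 * σ * (x ^ 2 / (2 * σ)) = x ^ 2 from by field_simp)]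
      have h1 : |x| ≤ Real.exp (x ^ 2 / (2 * σ ^ 2)) * σ := by
        rw [mul_comm]; exact h4.trans h3
      calc Real.exp (-x ^ 2 / (2 * σ ^ 2)) * |x|
          ≤ Real.exp (-x ^ 2 / (2 * σ ^ 2)) * (Real.exp (x ^ 2 / (2 * σ ^ 2)) * σ) :=
            mul_le_mul_of_nonneg_left h1 (Real.exp_pos _).le
        _ = σ := by
            rw [← mul_assoc, ← Real.exp_add,
              show -x ^ 2 / (2 * σ ^ 2) + x ^ 2 / (2 * σ ^ 2) = 0 from by ring,
              Real.exp_zero, one_mul]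
      
    unfold s14K
    calc 1 / (Real.sqrt (2 * π) * σ) * (Real.exp (-x ^ 2 / (2 * σ ^ 2)) * (|x| / σ ^ 2))
        = (Real.exp (-x ^ 2 / (2 * σ ^ 2)) * |x|) / (Real.sqrt (2 * π) * σ * σ ^ 2) := by ring
      _ ≤ σ / (Real.sqrt (2 * π) * σ * σ ^ 2) := by gcongr
      _ = 1 / (Real.sqrt (2 * π) * σ ^ 2) := by field_simp

lemma s14phi_le_psi (σ : ℝ) (hσ : 0 < σ) {u v : ℝ} (h : |v - u| ≤ 1) :
    s14phi σ v ≤ s14psi σ u := by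
  have h2π : 0 < Real.sqrt (2 * π) := Real.sqrt_pos.2 (by positivity)
  unfold s14phi s14psi
  rw [mul_assoc, ← Real.exp_add]
  apply mul_le_mul_of_nonneg_left _ (by positivity)
  apply Real.exp_le_exp.2
  -- -v²/(2σ²) ≤ 1/(2σ²) - u²/(4σ²), i.e. u² ≤ 2v² + 2
  have hv : u ^ 2 ≤ 2 * v ^ 2 + 2 := by
    have h1 : (v - u) ^ 2 ≤ 1 := by
      have := abs_nonneg (v - u)
      nlinarith [sq_abs (v - u)]
    nlinarith [sq_nonneg (u - 2 * v)]
  rw [div_add_div _ _ (by positivity : (2 * σ ^ 2 : ℝ) ≠ 0) (by positivity : (4 * σ ^ 2 : ℝ) ≠ 0),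
    div_le_div_iff₀ (by positivity) (by positivity)]
  nlinarith [sq_nonneg σ, sq_nonneg v, mul_pos hσ hσ, pow_pos hσ 2, sq_nonneg (σ^2)]

lemma s14integrable_sq_exp {b : ℝ} (hb : 0 < b) :
    Integrable fun x : ℝ => x ^ 2 * Real.exp (-b * x ^ 2) := by
  have h := integrable_rpow_mul_exp_neg_mul_sq hb (s := 2) (by norm_num)
  have h2 : ∀ x : ℝ, x ^ (2 : ℝ) = x ^ 2 := fun x => by
    rw [show (2 : ℝ) = ((2 : ℕ) : ℝ) by norm_num, Real.rpow_natCast]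
  simpa [h2] using h

lemma s14integrable_abs_exp {b : ℝ} (hb : 0 < b) :
    Integrable fun x : ℝ => |x| * Real.exp (-b * x ^ 2) := by
  have := (integrable_mul_exp_neg_mul_sq hb).abs
  simpa [abs_mul, abs_of_nonneg (Real.exp_pos _).le] using this

lemma s14integrable_phi (σ : ℝ) (hσ : 0 < σ) : Integrable (s14phi σ) := by
  have hb : (0 : ℝ) < 1 / (2 * σ ^ 2) := by positivity
  have hrep : s14phi σ = fun u => (1 / (Real.sqrt (2 * π) * σ)) *
      Real.exp (-(1 / (2 * σ ^ 2)) * u ^ 2) := by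
    funext u; unfold s14phi; congr 1; ring_nf
  rw [hrep]
  exact (integrable_exp_neg_mul_sq hb).const_mul _

lemma s14F_rep (σ : ℝ) : s14F σ = fun u => (1 / (Real.sqrt (2 * π) * σ)) ^ 3 *
    (u ^ 2 * Real.exp (-(3 / (2 * σ ^ 2)) * u ^ 2)) := by
  funext u
  unfold s14F s14phi
  rw [mul_pow, ← Real.exp_nat_mul]
  ring_nf

lemma s14integrable_F (σ : ℝ) (hσ : 0 < σ) : Integrable (s14F σ) := by
  have hb : (0 : ℝ) < 3 / (2 * σ ^ 2) := by positivity
  rw [s14F_rep]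
  exact (s14integrable_sq_exp hb).const_mul _

lemma s14B_rep (σ : ℝ) : s14B σ = fun u =>
    ((1 / (Real.sqrt (2 * π) * σ)) * Real.exp (1 / (2 * σ ^ 2))) ^ 3 *
      (|u| * Real.exp (-(3 / (4 * σ ^ 2)) * u ^ 2)) +
    ((1 / (Real.sqrt (2 * π) * σ)) * Real.exp (1 / (2 * σ ^ 2))) ^ 3 *
      Real.exp (-(3 / (4 * σ ^ 2)) * u ^ 2) +
    (3 * s14K σ * ((1 / (Real.sqrt (2 * π) * σ)) * Real.exp (1 / (2 * σ ^ 2))) ^ 2) *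
      (u ^ 2 * Real.exp (-(1 / (2 * σ ^ 2)) * u ^ 2)) := by
  funext u
  unfold s14B s14psi
  rw [show ((1 : ℝ) / (Real.sqrt (2 * π) * σ) * Real.exp (1 / (2 * σ ^ 2)) *
      Real.exp (-u ^ 2 / (4 * σ ^ 2))) ^ 3 =
      ((1 : ℝ) / (Real.sqrt (2 * π) * σ) * Real.exp (1 / (2 * σ ^ 2))) ^ 3 *
      Real.exp (-u ^ 2 / (4 * σ ^ 2)) ^ 3 from by ring,
    show ((1 : ℝ) / (Real.sqrt (2 * π) * σ) * Real.exp (1 / (2 * σ ^ 2)) *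
      Real.exp (-u ^ 2 / (4 * σ ^ 2))) ^ 2 =
      ((1 : ℝ) / (Real.sqrt (2 * π) * σ) * Real.exp (1 / (2 * σ ^ 2))) ^ 2 *
      Real.exp (-u ^ 2 / (4 * σ ^ 2)) ^ 2 from by ring,
    ← Real.exp_nat_mul, ← Real.exp_nat_mul]
  ring_nf

lemma s14integrable_B (σ : ℝ) (hσ : 0 < σ) : Integrable (s14B σ) := by
  have hb1 : (0 : ℝ) < 3 / (4 * σ ^ 2) := by positivity
  have hb2 : (0 : ℝ) < 1 / (2 * σ ^ 2) := by positivity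
  rw [s14B_rep]
  exact (((s14integrable_abs_exp hb1).const_mul _).add
    ((integrable_exp_neg_mul_sq hb1).const_mul _)).add
    ((s14integrable_sq_exp hb2).const_mul _)

lemma s14integral_sq (b : ℝ) (hb : 0 < b) :
    ∫ x : ℝ, x ^ 2 * Real.exp (-b * x ^ 2) = Real.sqrt (π / b) / (2 * b) := by
  have hexp : ∀ x : ℝ, HasDerivAt (fun x => Real.exp (-b * x ^ 2))
      (Real.exp (-b * x ^ 2) * (-b * (2 * x))) x := by
    intro x
    have h1 : HasDerivAt (fun x : ℝ => -b * x ^ 2) (-b * (2 * x)) x := by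
      simpa using (hasDerivAt_pow 2 x).const_mul (-b)
    exact h1.exp
  have hzero : ∫ x : ℝ, (Real.exp (-b * x ^ 2) - 2 * b * (x ^ 2 * Real.exp (-b * x ^ 2))) = 0 := by
    apply integral_eq_zero_of_hasDerivAt_of_integrable
      (f := fun x => x * Real.exp (-b * x ^ 2))
    · intro x
      have h := (hasDerivAt_id x).mul (hexp x)
      convert h using 1
      · rfl
      · rfl
      · simp only [id_eq]
        ring
    · exact (integrable_exp_neg_mul_sq hb).sub ((s14integrable_sq_exp hb).const_mul (2 * b))
    · exact integrable_mul_exp_neg_mul_sq hb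
  rw [integral_sub (integrable_exp_neg_mul_sq hb) ((s14integrable_sq_exp hb).const_mul (2 * b)),
    MeasureTheory.integral_const_mul, integral_gaussian, sub_eq_zero] at hzero
  rw [eq_div_iff (by positivity : (2 * b : ℝ) ≠ 0), hzero]
  ring

lemma s14integral_F (σ : ℝ) (hσ : 0 < σ) :
    ∫ u : ℝ, s14F σ u = 1 / (6 * Real.sqrt 3 * π) := by
  have hb : (0 : ℝ) < 3 / (2 * σ ^ 2) := by positivity
  have h1 : ∫ u : ℝ, s14F σ u = (1 / (Real.sqrt (2 * π) * σ)) ^ 3 *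
      (Real.sqrt (π / (3 / (2 * σ ^ 2))) / (2 * (3 / (2 * σ ^ 2)))) := by
    rw [show (∫ u : ℝ, s14F σ u) = ∫ u : ℝ, (1 / (Real.sqrt (2 * π) * σ)) ^ 3 *
        (u ^ 2 * Real.exp (-(3 / (2 * σ ^ 2)) * u ^ 2)) from by rw [← s14F_rep],
      MeasureTheory.integral_const_mul, s14integral_sq _ hb]
  rw [h1]
  have hsqarg : π / (3 / (2 * σ ^ 2)) = (2 * π) * σ ^ 2 / 3 := by field_simp
  have hsq : Real.sqrt (π / (3 / (2 * σ ^ 2))) = Real.sqrt (2 * π) * σ / Real.sqrt 3 := by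
    rw [hsqarg, show (2 * π) * σ ^ 2 / 3 = (2 * π * σ ^ 2) / 3 from by ring,
      Real.sqrt_div (by positivity), Real.sqrt_mul (by positivity), Real.sqrt_sq hσ.le]
  have h2π : (0 : ℝ) < Real.sqrt (2 * π) := Real.sqrt_pos.2 (by positivity)
  have h3 : (0 : ℝ) < Real.sqrt 3 := Real.sqrt_pos.2 (by norm_num)
  have e2 : Real.sqrt (2 * π) ^ 2 = 2 * π := Real.sq_sqrt (by positivity)
  rw [hsq]
  have hmain : (1 / (Real.sqrt (2 * π) * σ)) ^ 3 *
      ((Real.sqrt (2 * π) * σ / Real.sqrt 3) / (2 * (3 / (2 * σ ^ 2)))) =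
      1 / (3 * Real.sqrt 3 * Real.sqrt (2 * π) ^ 2) := by
    field_simp
  rw [hmain, e2]
  ring

lemma s14hasSum (f : ℝ → ℝ) (hf : Integrable f) {Δx : ℝ} (hΔ : 0 < Δx) (s : ℝ) :
    HasSum (fun i : ℤ => ∫ u in Set.Ioc (s + i * Δx) (s + i * Δx + Δx), f u) (∫ u, f u) := by
  have hdisj : Pairwise (Function.onFun Disjoint fun i : ℤ =>
      Set.Ioc (s + i * Δx) (s + i * Δx + Δx)) := by
    intro i j hij
    simp only [Function.onFun, Set.Ioc_disjoint_Ioc]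
    rcases lt_or_gt_of_ne hij with h | h
    · have : (i : ℝ) + 1 ≤ (j : ℝ) := by exact_mod_cast h
      have : s + i * Δx + Δx ≤ s + j * Δx := by nlinarith
      exact le_trans (min_le_left _ _) (le_trans this (le_max_right _ _))
    · have : (j : ℝ) + 1 ≤ (i : ℝ) := by exact_mod_cast h
      have : s + j * Δx + Δx ≤ s + i * Δx := by nlinarith
      exact le_trans (min_le_right _ _) (le_trans this (le_max_left _ _))
  have hcover : (⋃ i : ℤ, Set.Ioc (s + i * Δx) (s + i * Δx + Δx)) = Set.univ := by
    ext x
    simp only [Set.mem_iUnion, Set.mem_univ, iff_true, Set.mem_Ioc]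
    set t : ℝ := (x - s) / Δx with ht
    refine ⟨⌈t⌉ - 1, ?_, ?_⟩
    · have h1 : (⌈t⌉ : ℝ) - 1 < t := by
        have := Int.ceil_lt_add_one t
        linarith
      have h2 : ((⌈t⌉ - 1 : ℤ) : ℝ) * Δx < t * Δx := by
        push_cast
        exact mul_lt_mul_of_pos_right (by push_cast; linarith) hΔ
      have h3 : t * Δx = x - s := div_mul_cancel₀ _ (ne_of_gt hΔ)
      linarith
    · have h1 : t ≤ (⌈t⌉ : ℝ) := Int.le_ceil t
      have h2 : t * Δx ≤ (⌈t⌉ : ℝ) * Δx := mul_le_mul_of_nonneg_right h1 hΔ.le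
      have h3 : t * Δx = x - s := div_mul_cancel₀ _ (ne_of_gt hΔ)
      push_cast
      nlinarith
  have := MeasureTheory.hasSum_integral_iUnion
    (μ := (volume : Measure ℝ)) (f := f)
    (fun i : ℤ => measurableSet_Ioc) hdisj (by rw [hcover]; exact hf.integrableOn)
  rwa [hcover, MeasureTheory.setIntegral_univ] at this

lemma s14pointwise (σ : ℝ) (hσ : 0 < σ) {Δx a u p : ℝ} (hΔ : 0 < Δx) (hΔ1 : Δx ≤ 1)
    (hau : |a - u| ≤ Δx / 2) (hp0 : 0 ≤ p) (hpψ : p ≤ s14psi σ u)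
    (hpq : |p - s14phi σ u| ≤ s14K σ * Δx) :
    |a ^ 2 * p ^ 3 - s14F σ u| ≤ Δx * s14B σ u := by
  set q := s14phi σ u with hq
  set ψ := s14psi σ u with hψ
  have hq0 : 0 ≤ q := s14phi_nonneg σ hσ u
  have hqψ : q ≤ ψ := s14phi_le_psi σ hσ (u := u) (v := u) (by simp)
  have hψ0 : 0 ≤ ψ := s14psi_nonneg σ hσ u
  have hK0 : 0 ≤ s14K σ := s14K_nonneg σ
  have key : a ^ 2 * p ^ 3 - s14F σ u =
      (a ^ 2 - u ^ 2) * p ^ 3 + u ^ 2 * (p ^ 3 - q ^ 3) := by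
    unfold s14F; rw [← hq]; ring
  have h1 : |a ^ 2 - u ^ 2| ≤ Δx * (|u| + 1) := by
    have e : a ^ 2 - u ^ 2 = (a - u) * (a + u) := by ring
    rw [e, abs_mul]
    have h2 : |a + u| ≤ Δx / 2 + 2 * |u| := by
      calc |a + u| = |(a - u) + 2 * u| := by ring_nf
        _ ≤ |a - u| + |2 * u| := abs_add_le _ _
        _ ≤ Δx / 2 + 2 * |u| := by rw [abs_mul, abs_two]; linarith
    nlinarith [abs_nonneg (a - u), abs_nonneg u, abs_nonneg (a + u)]
  have h2 : |p ^ 3 - q ^ 3| ≤ s14K σ * Δx * (3 * ψ ^ 2) := by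
    have e : p ^ 3 - q ^ 3 = (p - q) * (p ^ 2 + p * q + q ^ 2) := by ring
    rw [e, abs_mul]
    have hfac : |p ^ 2 + p * q + q ^ 2| ≤ 3 * ψ ^ 2 := by
      rw [abs_of_nonneg (by positivity)]
      nlinarith
    exact mul_le_mul hpq hfac (abs_nonneg _) (by positivity)
  have hp3 : p ^ 3 ≤ ψ ^ 3 := pow_le_pow_left₀ hp0 hpψ 3
  calc |a ^ 2 * p ^ 3 - s14F σ u|
      ≤ |a ^ 2 - u ^ 2| * p ^ 3 + u ^ 2 * |p ^ 3 - q ^ 3| := by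
        rw [key]
        refine (abs_add_le _ _).trans ?_
        rw [abs_mul, abs_mul, abs_of_nonneg (by positivity : (0:ℝ) ≤ p ^ 3),
          abs_of_nonneg (sq_nonneg u)]
    _ ≤ (Δx * (|u| + 1)) * ψ ^ 3 + u ^ 2 * (s14K σ * Δx * (3 * ψ ^ 2)) := by
        gcongr
    _ = Δx * s14B σ u := by unfold s14B; rw [← hψ]; ring

lemma s14main (σ xc r : ℝ) (hσ : 0 < σ) (g : ℝ → ℤ → ℝ)
    (hg : ∀ Δx : ℝ, ∀ i : ℤ, g Δx i =
      ∫ x in (((i : ℝ) + r) * Δx - Δx / 2)..(((i : ℝ) + r) * Δx + Δx / 2),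
        (1 / (Real.sqrt (2 * π) * σ)) * Real.exp (-(x - xc) ^ 2 / (2 * σ ^ 2)))
    {Δx : ℝ} (hΔ : 0 < Δx) (hΔ1 : Δx ≤ 1) :
    |(1 / Δx ^ 2) * ∑' i : ℤ, (((i : ℝ) + r) * Δx - xc) ^ 2 * g Δx i ^ 3 -
      ∫ u, s14F σ u| ≤ Δx * ∫ u, s14B σ u := by
  have hΔ' : Δx ≠ 0 := ne_of_gt hΔ
  -- g as a set integral of phi
  have hgJ : ∀ i : ℤ, g Δx i = ∫ u in Set.Ioc ((r - 1/2) * Δx - xc + (i : ℝ) * Δx)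
      ((r - 1/2) * Δx - xc + (i : ℝ) * Δx + Δx), s14phi σ u := by
    intro i
    rw [hg Δx i]
    have h1 : (∫ x in (((i : ℝ) + r) * Δx - Δx / 2)..(((i : ℝ) + r) * Δx + Δx / 2),
        (1 / (Real.sqrt (2 * π) * σ)) * Real.exp (-(x - xc) ^ 2 / (2 * σ ^ 2)))
        = ∫ x in (((i : ℝ) + r) * Δx - Δx / 2)..(((i : ℝ) + r) * Δx + Δx / 2),
          s14phi σ (x - xc) := rfl
    rw [h1, intervalIntegral.integral_comp_sub_right (fun u => s14phi σ u) xc,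
      intervalIntegral.integral_of_le
        (by linarith : ((i : ℝ) + r) * Δx - Δx / 2 - xc ≤ ((i : ℝ) + r) * Δx + Δx / 2 - xc),
      show ((i : ℝ) + r) * Δx - Δx / 2 - xc = (r - 1/2) * Δx - xc + (i : ℝ) * Δx from by ring,
      show ((i : ℝ) + r) * Δx + Δx / 2 - xc = (r - 1/2) * Δx - xc + (i : ℝ) * Δx + Δx from by
        ring]
  -- per-interval estimate
  have key : ∀ i : ℤ,
      |(1 / Δx ^ 2) * ((((i : ℝ) + r) * Δx - xc) ^ 2 * g Δx i ^ 3) -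
        ∫ u in Set.Ioc ((r - 1/2) * Δx - xc + (i : ℝ) * Δx)
          ((r - 1/2) * Δx - xc + (i : ℝ) * Δx + Δx), s14F σ u| ≤
      Δx * ∫ u in Set.Ioc ((r - 1/2) * Δx - xc + (i : ℝ) * Δx)
          ((r - 1/2) * Δx - xc + (i : ℝ) * Δx + Δx), s14B σ u := by
    intro i
    have hgi := hgJ i
    obtain ⟨L, hL⟩ : ∃ L : ℝ, (r - 1/2) * Δx - xc + (i : ℝ) * Δx = L := ⟨_, rfl⟩
    rw [hL] at hgi ⊢
    have hd : ((i : ℝ) + r) * Δx - xc = L + Δx / 2 := by rw [← hL]; ring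
    have hmeas : MeasurableSet (Set.Ioc L (L + Δx)) := measurableSet_Ioc
    have hfin : volume (Set.Ioc L (L + Δx)) < ⊤ := by
      rw [Real.volume_Ioc]; exact ENNReal.ofReal_lt_top
    have hvol : (volume (Set.Ioc L (L + Δx))).toReal = Δx := by
      rw [Real.volume_Ioc, add_sub_cancel_left, ENNReal.toReal_ofReal hΔ.le]
    have hφint : IntegrableOn (s14phi σ) (Set.Ioc L (L + Δx)) :=
      (s14integrable_phi σ hσ).integrableOn
    have hg0 : 0 ≤ g Δx i := by
      rw [hgi]
      exact MeasureTheory.setIntegral_nonneg hmeas (fun u _ => s14phi_nonneg σ hσ u)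
    have hpψ : ∀ u ∈ Set.Ioc L (L + Δx), g Δx i ≤ Δx * s14psi σ u := by
      intro u hu
      rw [hgi]
      calc (∫ v in Set.Ioc L (L + Δx), s14phi σ v)
          ≤ ∫ _ in Set.Ioc L (L + Δx), s14psi σ u := by
            refine MeasureTheory.setIntegral_mono_on hφint
              (MeasureTheory.integrableOn_const hfin.ne) hmeas (fun v hv => ?_)
            refine s14phi_le_psi σ hσ (le_trans (abs_le.2 ⟨?_, ?_⟩) hΔ1)
            · have := hu.2; have := hv.1; linarith
            · have := hu.1; have := hv.2; linarith
        _ = Δx * s14psi σ u := by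
            rw [MeasureTheory.setIntegral_const, measureReal_def, hvol, smul_eq_mul]
    have hpq : ∀ u ∈ Set.Ioc L (L + Δx),
        |g Δx i - Δx * s14phi σ u| ≤ s14K σ * Δx * Δx := by
      intro u hu
      have hcint : IntegrableOn (fun _ : ℝ => s14phi σ u) (Set.Ioc L (L + Δx)) :=
        MeasureTheory.integrableOn_const hfin.ne
      have hconst : (∫ _ in Set.Ioc L (L + Δx), s14phi σ u) = Δx * s14phi σ u := by
        rw [MeasureTheory.setIntegral_const, measureReal_def, hvol, smul_eq_mul]
      have hsub : g Δx i - Δx * s14phi σ u =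
          ∫ v in Set.Ioc L (L + Δx), (s14phi σ v - s14phi σ u) := by
        rw [hgi, ← hconst, ← MeasureTheory.integral_sub hφint hcint]
      rw [hsub]
      calc |∫ v in Set.Ioc L (L + Δx), (s14phi σ v - s14phi σ u)|
          ≤ ∫ v in Set.Ioc L (L + Δx), |s14phi σ v - s14phi σ u| := by
            simpa [Real.norm_eq_abs] using
              MeasureTheory.norm_integral_le_integral_norm
                (μ := volume.restrict (Set.Ioc L (L + Δx)))
                (fun v => s14phi σ v - s14phi σ u)
        _ ≤ ∫ _ in Set.Ioc L (L + Δx), s14K σ * Δx := by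
            refine MeasureTheory.setIntegral_mono_on ((hφint.sub hcint).abs)
              (MeasureTheory.integrableOn_const hfin.ne) hmeas (fun v hv => ?_)
            refine (s14phi_lip σ hσ u v).trans ?_
            refine mul_le_mul_of_nonneg_left (abs_le.2 ⟨?_, ?_⟩) (s14K_nonneg σ)
            · have := hu.2; have := hv.1; linarith
            · have := hu.1; have := hv.2; linarith
        _ = s14K σ * Δx * Δx := by
            rw [MeasureTheory.setIntegral_const, measureReal_def, hvol, smul_eq_mul]; ring
    -- pointwise bound on the interval
    have hptw : ∀ u ∈ Set.Ioc L (L + Δx),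
        |(((i : ℝ) + r) * Δx - xc) ^ 2 * (g Δx i / Δx) ^ 3 - s14F σ u| ≤ Δx * s14B σ u := by
      intro u hu
      refine s14pointwise σ hσ hΔ hΔ1 ?_ (div_nonneg hg0 hΔ.le) ?_ ?_
      · rw [hd]
        refine abs_le.2 ⟨?_, ?_⟩
        · have := hu.2; linarith
        · have := hu.1; linarith
      · rw [div_le_iff₀ hΔ]
        have := hpψ u hu; linarith [mul_comm Δx (s14psi σ u)]
      · have he : g Δx i / Δx - s14phi σ u = (g Δx i - Δx * s14phi σ u) / Δx := by
          field_simp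
        rw [he, abs_div, abs_of_pos hΔ, div_le_iff₀ hΔ]
        exact hpq u hu
    -- assemble
    have hc : (1 / Δx ^ 2) * ((((i : ℝ) + r) * Δx - xc) ^ 2 * g Δx i ^ 3) =
        Δx * ((((i : ℝ) + r) * Δx - xc) ^ 2 * (g Δx i / Δx) ^ 3) := by
      field_simp
    have hcint2 : (∫ _ in Set.Ioc L (L + Δx),
        (((i : ℝ) + r) * Δx - xc) ^ 2 * (g Δx i / Δx) ^ 3) =
        Δx * ((((i : ℝ) + r) * Δx - xc) ^ 2 * (g Δx i / Δx) ^ 3) := by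
      rw [MeasureTheory.setIntegral_const, measureReal_def, hvol, smul_eq_mul]
    have hFi : IntegrableOn (s14F σ) (Set.Ioc L (L + Δx)) :=
      (s14integrable_F σ hσ).integrableOn
    have hBi : IntegrableOn (s14B σ) (Set.Ioc L (L + Δx)) :=
      (s14integrable_B σ hσ).integrableOn
    rw [hc, ← hcint2, ← MeasureTheory.integral_sub
      (MeasureTheory.integrableOn_const (C := (((i : ℝ) + r) * Δx - xc) ^ 2 * (g Δx i / Δx) ^ 3)
        hfin.ne) hFi]
    calc |∫ u in Set.Ioc L (L + Δx),
          ((((i : ℝ) + r) * Δx - xc) ^ 2 * (g Δx i / Δx) ^ 3 - s14F σ u)|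
        ≤ ∫ u in Set.Ioc L (L + Δx),
          |(((i : ℝ) + r) * Δx - xc) ^ 2 * (g Δx i / Δx) ^ 3 - s14F σ u| := by
          simpa [Real.norm_eq_abs] using
            MeasureTheory.norm_integral_le_integral_norm
              (μ := volume.restrict (Set.Ioc L (L + Δx)))
              (fun u => (((i : ℝ) + r) * Δx - xc) ^ 2 * (g Δx i / Δx) ^ 3 - s14F σ u)
      _ ≤ ∫ u in Set.Ioc L (L + Δx), Δx * s14B σ u := by
          refine MeasureTheory.setIntegral_mono_on
            (((MeasureTheory.integrableOn_const hfin.ne).sub hFi).abs)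
            (hBi.const_mul Δx) hmeas hptw
      _ = Δx * ∫ u in Set.Ioc L (L + Δx), s14B σ u := by
          rw [MeasureTheory.integral_const_mul]
  -- sum up
  have hF : HasSum (fun i : ℤ => ∫ u in Set.Ioc ((r - 1/2) * Δx - xc + (i : ℝ) * Δx)
      ((r - 1/2) * Δx - xc + (i : ℝ) * Δx + Δx), s14F σ u) (∫ u, s14F σ u) :=
    s14hasSum _ (s14integrable_F σ hσ) hΔ _
  have hB : HasSum (fun i : ℤ => ∫ u in Set.Ioc ((r - 1/2) * Δx - xc + (i : ℝ) * Δx)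
      ((r - 1/2) * Δx - xc + (i : ℝ) * Δx + Δx), s14B σ u) (∫ u, s14B σ u) :=
    s14hasSum _ (s14integrable_B σ hσ) hΔ _
  set T : ℤ → ℝ := fun i => (1 / Δx ^ 2) * ((((i : ℝ) + r) * Δx - xc) ^ 2 * g Δx i ^ 3)
    with hT
  set Fi : ℤ → ℝ := fun i => ∫ u in Set.Ioc ((r - 1/2) * Δx - xc + (i : ℝ) * Δx)
      ((r - 1/2) * Δx - xc + (i : ℝ) * Δx + Δx), s14F σ u with hFi
  set Bi : ℤ → ℝ := fun i => ∫ u in Set.Ioc ((r - 1/2) * Δx - xc + (i : ℝ) * Δx)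
      ((r - 1/2) * Δx - xc + (i : ℝ) * Δx + Δx), s14B σ u with hBi
  have hT0 : ∀ i, 0 ≤ T i := by
    intro i
    have hg0 : 0 ≤ g Δx i := by
      rw [hgJ i]
      exact MeasureTheory.setIntegral_nonneg measurableSet_Ioc
        (fun u _ => s14phi_nonneg σ hσ u)
    rw [hT]
    positivity
  have hBisum : Summable (fun i => Δx * Bi i) := (hB.summable.mul_left Δx)
  have hTsum : Summable T := by
    refine Summable.of_nonneg_of_le hT0 (fun i => ?_) (hF.summable.add hBisum)
    have h := key i
    have : T i - Fi i ≤ |T i - Fi i| := le_abs_self _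
    simp only [hT, hFi, hBi] at *
    linarith
  have hdiff : HasSum (fun i => T i - Fi i) ((∑' i, T i) - ∫ u, s14F σ u) := by
    simpa using hTsum.hasSum.sub hF
  have habs : Summable (fun i => |T i - Fi i|) :=
    Summable.of_nonneg_of_le (fun i => abs_nonneg _) (fun i => key i) hBisum
  have hbound : |(∑' i, T i) - ∫ u, s14F σ u| ≤ Δx * ∫ u, s14B σ u := by
    rw [← hdiff.tsum_eq]
    calc |∑' i, (T i - Fi i)| ≤ ∑' i, |T i - Fi i| := by
          simpa [Real.norm_eq_abs] using norm_tsum_le_tsum_norm (f := fun i => T i - Fi i)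
            (by simpa [Real.norm_eq_abs] using habs)
      _ ≤ ∑' i, Δx * Bi i := habs.tsum_le_tsum (fun i => key i) hBisum
      _ = Δx * ∫ u, s14B σ u := (hB.mul_left Δx).tsum_eq
  rw [show (1 / Δx ^ 2) * ∑' i : ℤ, (((i : ℝ) + r) * Δx - xc) ^ 2 * g Δx i ^ 3
      = ∑' i, T i from (tsum_mul_left).symm]
  exact hbound

/-- **High-resolution limit of `Σ (x_i − x_c)² g_i³`.**  For pixels of size
`Δx` centered at `x_i = (i+r)Δx` with Gaussian flux fractions `g_i(x_c)`,
`(1/Δx²) Σ_{i∈ℤ} (x_i − x_c)² g_i(x_c)³ → 1/(6√3 π)` as `Δx → 0⁺`. -/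
theorem stmt_14
    (σ xc r : ℝ) (hσ : 0 < σ) (hr : r ∈ Set.Ico (0 : ℝ) 1)
    (g : ℝ → ℤ → ℝ)
    (hg : ∀ Δx : ℝ, ∀ i : ℤ, g Δx i =
      ∫ x in (((i : ℝ) + r) * Δx - Δx / 2)..(((i : ℝ) + r) * Δx + Δx / 2),
        (1 / (Real.sqrt (2 * π) * σ)) * Real.exp (-(x - xc) ^ 2 / (2 * σ ^ 2))) :
    Tendsto (fun Δx : ℝ =>
        (1 / Δx ^ 2) * ∑' i : ℤ, (((i : ℝ) + r) * Δx - xc) ^ 2 * g Δx i ^ 3)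
      (𝓝[>] 0) (𝓝 (1 / (6 * Real.sqrt 3 * π))) := by
  have hL : (1 : ℝ) / (6 * Real.sqrt 3 * π) = ∫ u, s14F σ u := (s14integral_F σ hσ).symm
  have hev : ∀ᶠ Δx in 𝓝[>] (0 : ℝ),
      ‖(1 / Δx ^ 2) * (∑' i : ℤ, (((i : ℝ) + r) * Δx - xc) ^ 2 * g Δx i ^ 3) -
        1 / (6 * Real.sqrt 3 * π)‖ ≤ Δx * ∫ u, s14B σ u := by
    filter_upwards [Ioc_mem_nhdsGT_of_mem
      (⟨le_refl (0 : ℝ), zero_lt_one⟩ : (0 : ℝ) ∈ Set.Ico (0 : ℝ) 1)] with Δx hΔx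
    rw [Real.norm_eq_abs, hL]
    exact s14main σ xc r hσ g hg hΔx.1 hΔx.2
  have h0 : Tendsto (fun Δx : ℝ => Δx * ∫ u, s14B σ u) (𝓝[>] (0 : ℝ)) (𝓝 0) := by
    have h1 : Tendsto (fun Δx : ℝ => Δx * ∫ u, s14B σ u) (𝓝 (0 : ℝ))
        (𝓝 (0 * ∫ u, s14B σ u)) := tendsto_id.mul_const _
    simpa using h1.mono_left nhdsWithin_le_nhds
  have hkey : Tendsto (fun Δx : ℝ =>
      (1 / Δx ^ 2) * (∑' i : ℤ, (((i : ℝ) + r) * Δx - xc) ^ 2 * g Δx i ^ 3) -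
        1 / (6 * Real.sqrt 3 * π)) (𝓝[>] (0 : ℝ)) (𝓝 0) :=
    squeeze_zero_norm' hev h0
  have hfin := hkey.add (tendsto_const_nhds
    (x := (1 : ℝ) / (6 * Real.sqrt 3 * π)) (f := 𝓝[>] (0 : ℝ)))
  simpa using hfin
end
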